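/- arXiv:2503.03554 — 4 statements merged into one kernel-verified Lean document; each statement's English description precedes it below -/
import Mathlib

section
/- Fix x₀ ∈ ℝ^N and set q(x) = √2 · d(x, x₀). Let x ∈ ℝ^N satisfy x ≠ 0, x ≠ x₀, and ‖x‖‖x₀‖ + ⟨x, x₀⟩ > 0. Then q is differentiable at x and ‖∇q(x)‖ = 1/√(2‖x‖). Moreover q(x₀) = 0; that is, √2 d(·, x₀) solves the eikonal equation |∇q(x)| = 1/√(2|x|) with q(x₀) = 0. -/
/-- The metric `d(x,y) = sqrt(‖x‖ + ‖y‖ − sqrt(2(‖x‖‖y‖ + ⟨x,y⟩)))` of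
`(k,1)`-generalized Fourier analysis. -/
noncomputable def dkOne {N : ℕ} (x y : EuclideanSpace ℝ (Fin N)) : ℝ :=
  Real.sqrt (‖x‖ + ‖y‖ - Real.sqrt (2 * (‖x‖ * ‖y‖ + (inner ℝ x y : ℝ))))

lemma hasFDerivAt_norm_aux {N : ℕ} (x : EuclideanSpace ℝ (Fin N)) (hx : x ≠ 0) :
    HasFDerivAt (fun y : EuclideanSpace ℝ (Fin N) => ‖y‖) (‖x‖⁻¹ • innerSL ℝ x) x := by
  have hx' : ‖x‖ ≠ 0 := norm_ne_zero_iff.2 hx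
  have h1 : HasFDerivAt (fun y : EuclideanSpace ℝ (Fin N) => ‖y‖ ^ 2) (2 • innerSL ℝ x) x :=
    (hasStrictFDerivAt_norm_sq x).hasFDerivAt
  have h2 := h1.sqrt (by positivity)
  have e1 : (fun y : EuclideanSpace ℝ (Fin N) => Real.sqrt (‖y‖ ^ 2)) = fun y => ‖y‖ := by
    funext y; exact Real.sqrt_sq (norm_nonneg y)
  rw [e1, Real.sqrt_sq (norm_nonneg x)] at h2
  rw [show ‖x‖⁻¹ • innerSL ℝ x = (1 / (2 * ‖x‖)) • (2 • innerSL ℝ x) from ?_]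
  · exact h2
  ext v
  simp only [ContinuousLinearMap.coe_smul', Pi.smul_apply, smul_eq_mul,
    ContinuousLinearMap.smul_apply, nsmul_eq_mul]
  field_simp
  ring

lemma inner_comb {N : ℕ} (x y : EuclideanSpace ℝ (Fin N)) (a b : ℝ) :
    (inner ℝ (a • x + b • y) (a • x + b • y) : ℝ)
      = a ^ 2 * (‖x‖ * ‖x‖) + 2 * (a * b) * (inner ℝ x y : ℝ) + b ^ 2 * (‖y‖ * ‖y‖) := by
  simp only [inner_add_left, inner_add_right, real_inner_smul_left, real_inner_smul_right,
    real_inner_self_eq_norm_mul_norm x, real_inner_self_eq_norm_mul_norm y,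
    real_inner_comm y x]
  ring

lemma alg2_aux (r r0 c s u : ℝ) (hr : 0 < r) (hs : 0 < s) (hu : 0 < u)
    (hs2 : s ^ 2 = 2 * (r * r0 + c)) (hu' : u = r + r0 - s) :
    (1 / (2 * u)) * (((s - r0) / (r * s)) ^ 2 * (r * r)
      + 2 * (((s - r0) / (r * s)) * (-(1 / s))) * c + (-(1 / s)) ^ 2 * (r0 * r0))
      = 1 / (2 * r) := by
  have hrne : r ≠ 0 := hr.ne'
  have hsne : s ≠ 0 := hs.ne'
  have hune : u ≠ 0 := hu.ne'
  have hc : c = (s ^ 2 - 2 * r * r0) / 2 := by linarith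
  subst hc hu'
  field_simp
  ring

set_option maxHeartbeats 1000000 in
/-- `q = √2 · d(·, x₀)` solves the eikonal equation
`|∇q(x)| = 1/√(2|x|)` with `q(x₀) = 0`. -/
theorem statement2 (N : ℕ) (x₀ : EuclideanSpace ℝ (Fin N))
    (q : EuclideanSpace ℝ (Fin N) → ℝ)
    (hq : ∀ z, q z = Real.sqrt 2 * dkOne z x₀)
    (x : EuclideanSpace ℝ (Fin N)) (hx : x ≠ 0) (hxx0 : x ≠ x₀)
    (hpos : 0 < ‖x‖ * ‖x₀‖ + (inner ℝ x x₀ : ℝ)) :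
    DifferentiableAt ℝ q x ∧ ‖gradient q x‖ = 1 / Real.sqrt (2 * ‖x‖) ∧ q x₀ = 0 := by
  have hr : 0 < ‖x‖ := norm_pos_iff.2 hx
  set r : ℝ := ‖x‖ with hrdef
  set r0 : ℝ := ‖x₀‖ with hr0def
  set c : ℝ := (inner ℝ x x₀ : ℝ) with hcdef
  have hw0 : 0 < 2 * (r * r0 + c) := by linarith
  set s : ℝ := Real.sqrt (2 * (r * r0 + c)) with hsdef
  have hs : 0 < s := Real.sqrt_pos.2 hw0
  have hs2 : s ^ 2 = 2 * (r * r0 + c) := Real.sq_sqrt hw0.le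
  set u : ℝ := r + r0 - s with hudef
  have hxs : 0 < ‖x - x₀‖ := norm_pos_iff.2 (sub_ne_zero.2 hxx0)
  have hns : ‖x - x₀‖ ^ 2 = r ^ 2 - 2 * c + r0 ^ 2 := by
    rw [hrdef, hr0def, hcdef, @norm_sub_sq_real]
  have hid : u * (r + r0 + s) = ‖x - x₀‖ ^ 2 := by
    rw [hns, hudef]; nlinarith [hs2]
  have hu0 : 0 < u := by
    have h1 : 0 < r + r0 + s := by positivity
    nlinarith [pow_pos hxs 2]
  have hsne : s ≠ 0 := hs.ne'
  have hrne : r ≠ 0 := hr.ne'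
  have hus : (0 : ℝ) < Real.sqrt u := Real.sqrt_pos.2 hu0
  have husne : Real.sqrt u ≠ 0 := hus.ne'
  have h2 : Real.sqrt 2 ^ 2 = 2 := Real.sq_sqrt (by norm_num)
  have hu2 : Real.sqrt u ^ 2 = u := Real.sq_sqrt hu0.le
  -- derivative machinery
  have F1 : HasFDerivAt (fun y : EuclideanSpace ℝ (Fin N) => ‖y‖) (r⁻¹ • innerSL ℝ x) x :=
    hasFDerivAt_norm_aux x hx
  have F2 : HasFDerivAt (fun y : EuclideanSpace ℝ (Fin N) => (inner ℝ y x₀ : ℝ))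
      (innerSL ℝ x₀) x :=
    (innerSL ℝ x₀).hasFDerivAt.congr_of_eventuallyEq
      (Filter.Eventually.of_forall fun y => (real_inner_comm x₀ y))
  set W : EuclideanSpace ℝ (Fin N) →L[ℝ] ℝ :=
    (2 : ℝ) • (r0 • (r⁻¹ • innerSL ℝ x) + innerSL ℝ x₀) with hWdef
  have Fw : HasFDerivAt (fun y : EuclideanSpace ℝ (Fin N) =>
      2 * (‖y‖ * r0 + (inner ℝ y x₀ : ℝ))) W x := by
    have h := ((F1.mul_const r0).add F2).const_mul (2 : ℝ)
    exact h
  have Fs : HasFDerivAt (fun y : EuclideanSpace ℝ (Fin N) =>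
      Real.sqrt (2 * (‖y‖ * r0 + (inner ℝ y x₀ : ℝ)))) ((1 / (2 * s)) • W) x := by
    have h := Fw.sqrt (by exact hw0.ne')
    convert h using 2
  set U : EuclideanSpace ℝ (Fin N) →L[ℝ] ℝ := r⁻¹ • innerSL ℝ x - (1 / (2 * s)) • W with hUdef
  have Fu : HasFDerivAt (fun y : EuclideanSpace ℝ (Fin N) =>
      ‖y‖ + r0 - Real.sqrt (2 * (‖y‖ * r0 + (inner ℝ y x₀ : ℝ)))) U x :=
    (F1.add_const r0).sub Fs
  have hux : (‖x‖ + r0 - Real.sqrt (2 * (‖x‖ * r0 + (inner ℝ x x₀ : ℝ)))) = u := rfl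
  set D : EuclideanSpace ℝ (Fin N) →L[ℝ] ℝ :=
    Real.sqrt 2 • ((1 / (2 * Real.sqrt u)) • U) with hDdef
  have Fq : HasFDerivAt q D x := by
    have h := (Fu.sqrt (by rw [hux]; exact hu0.ne')).const_mul (Real.sqrt 2)
    have e : q = fun y => Real.sqrt 2 * Real.sqrt
        (‖y‖ + r0 - Real.sqrt (2 * (‖y‖ * r0 + (inner ℝ y x₀ : ℝ)))) := by
      funext y; rw [hq y, dkOne]
    rw [e]
    convert h using 2
  set g : EuclideanSpace ℝ (Fin N) :=
    (Real.sqrt 2 * (1 / (2 * Real.sqrt u))) •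
      (r⁻¹ • x - (1 / (2 * s)) • ((2 : ℝ) • (r0 • (r⁻¹ • x) + x₀))) with hgdef
  have hDg : InnerProductSpace.toDual ℝ (EuclideanSpace ℝ (Fin N)) g = D := by
    ext v
    simp [hgdef, hDdef, hUdef, hWdef, InnerProductSpace.toDual_apply_apply,
      inner_sub_left, inner_add_left, real_inner_smul_left]
    ring
  have Hq : HasGradientAt q g x := by
    rw [hasGradientAt_iff_hasFDerivAt, hDg]; exact Fq
  -- norm of the gradient
  have hg' : g = (Real.sqrt 2 / (2 * Real.sqrt u)) •
      (((s - r0) / (r * s)) • x + (-(1 / s)) • x₀) := by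
    rw [hgdef]
    match_scalars <;> field_simp <;> ring
  have hin := inner_comb x x₀ ((s - r0) / (r * s)) (-(1 / s))
  have hA : Real.sqrt 2 / (2 * Real.sqrt u) * (Real.sqrt 2 / (2 * Real.sqrt u)) = 1 / (2 * u) := by
    rw [div_mul_div_comm]
    rw [show (2 * Real.sqrt u) * (2 * Real.sqrt u) = 4 * (Real.sqrt u * Real.sqrt u) by ring,
      Real.mul_self_sqrt (by norm_num : (0:ℝ) ≤ 2), Real.mul_self_sqrt hu0.le]
    field_simp
    ring
  have hg2 : (inner ℝ g g : ℝ) = 1 / (2 * r) := by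
    rw [hg', real_inner_smul_left, real_inner_smul_right, ← mul_assoc, hA, hin]
    exact alg2_aux r r0 c s u hr hs hu0 hs2 hudef
  have hgn : ‖g‖ = 1 / Real.sqrt (2 * r) := by
    have h1 : ‖g‖ ^ 2 = 1 / (2 * r) := by rw [← real_inner_self_eq_norm_sq]; exact hg2
    have h2' : ‖g‖ = Real.sqrt (1 / (2 * r)) := by
      rw [← h1, Real.sqrt_sq (norm_nonneg g)]
    rw [h2', one_div, Real.sqrt_inv, one_div]
  refine ⟨Fq.differentiableAt, ?_, ?_⟩
  · rw [Hq.gradient]; exact hgn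
  · rw [hq x₀, dkOne]
    rw [show (inner ℝ x₀ x₀ : ℝ) = ‖x₀‖ * ‖x₀‖ from real_inner_self_eq_norm_mul_norm x₀]
    rw [show 2 * (‖x₀‖ * ‖x₀‖ + ‖x₀‖ * ‖x₀‖) = (2 * ‖x₀‖) ^ 2 by ring,
      Real.sqrt_sq (by positivity)]
    rw [show ‖x₀‖ + ‖x₀‖ - 2 * ‖x₀‖ = 0 by ring, Real.sqrt_zero, mul_zero]
end

section
/- Let N ≥ 1, let x₀, x ∈ ℝ^N \ {0}, and let γ : [0,1] → ℝ^N \ {0} be a piecewise continuously differentiable curve with γ(0) = x₀ and γ(1) = x. Then ∫₀¹ ‖γ′(t)‖ / √(2‖γ(t)‖) dt ≥ √2 · d(x, x₀). (That is, √2 d is a lower bound for the length of any curve avoiding the origin, measured in the conformal metric with density 1/√(2|x|); equivalently, √2 d(x, x₀) ≤ L(x, x₀), the Riemannian distance determined by the coefficient 1/√(2|x|).) -/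
open Real Set MeasureTheory intervalIntegral RealInnerProductSpace

variable {N : ℕ}

/-- Core algebraic inequality. -/
lemma core_ineq (s t ε A B W : ℝ) (hs : 0 ≤ s) (ht : 0 ≤ t) (hε : 0 < ε)
    (hr : 0 < s + t) (hc : (A*t + B*s)^2 ≤ 4*s*t*W^2) :
    A^2/(s+ε) + B^2/(t+ε) ≤ ((A-B)^2 + 4*W^2)/(s+t) := by
  have hsε : 0 < s + ε := by linarith
  have htε : 0 < t + ε := by linarith
  rcases eq_or_lt_of_le hs with h0 | hspos
  · -- s = 0
    have hs0 : s = 0 := h0.symm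
    subst hs0
    have htpos : 0 < t := by linarith
    have hA : A = 0 := by
      have h1 : (A*t)^2 ≤ 0 := by nlinarith
      have h2 : A * t = 0 := by nlinarith
      rcases mul_eq_zero.1 h2 with h | h
      · exact h
      · exact absurd h (ne_of_gt htpos)
    subst hA
    have e1 : (0:ℝ)^2/(0+ε) = 0 := by simp
    rw [e1, zero_add, zero_add, zero_sub, even_two.neg_pow]
    rw [div_le_div_iff₀ htε htpos]
    nlinarith [sq_nonneg B, sq_nonneg W]
  · rcases eq_or_lt_of_le ht with h0 | htpos
    · -- t = 0
      have ht0 : t = 0 := h0.symm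
      subst ht0
      have hB : B = 0 := by
        have h1 : (B*s)^2 ≤ 0 := by nlinarith
        have h2 : B * s = 0 := by nlinarith
        rcases mul_eq_zero.1 h2 with h | h
        · exact h
        · exact absurd h (ne_of_gt hspos)
      subst hB
      have e1 : (0:ℝ)^2/(0+ε) = 0 := by simp
      rw [e1, add_zero, add_zero, sub_zero]
      rw [div_le_div_iff₀ hsε hspos]
      nlinarith [sq_nonneg A, sq_nonneg W]
    · -- both positive
      have key : A^2/s + B^2/t ≤ ((A-B)^2 + 4*W^2)/(s+t) := by
        rw [div_add_div _ _ (ne_of_gt hspos) (ne_of_gt htpos),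
          div_le_div_iff₀ (by positivity) hr]
        nlinarith [hc]
      have h1 : A^2/(s+ε) ≤ A^2/s := by
        rw [div_le_div_iff₀ hsε hspos]; nlinarith [sq_nonneg A]
      have h2 : B^2/(t+ε) ≤ B^2/t := by
        rw [div_le_div_iff₀ htε htpos]; nlinarith [sq_nonneg B]
      linarith

lemma inner_expand (e a b : EuclideanSpace ℝ (Fin N)) (he : ‖e‖ = 1) (ca cb : ℝ) :
    ⟪a - ca • e, b - cb • e⟫ = ⟪a, b⟫ - cb * ⟪a, e⟫ - ca * ⟪b, e⟫ + ca * cb := by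
  have h1 : ⟪e, b⟫ = ⟪b, e⟫ := real_inner_comm b e
  have h2 : ⟪e, e⟫ = (1:ℝ) := by
    rw [real_inner_self_eq_norm_mul_norm, he]; ring
  rw [inner_sub_left, inner_sub_right, inner_sub_right, real_inner_smul_left,
    real_inner_smul_left, real_inner_smul_right, real_inner_smul_right, h1, h2]
  ring

/-- Scalar version of the pointwise bound. -/
lemma pb_scalar (s t A B W nv R c₁ c₂ ε : ℝ) (hs : 0 ≤ s) (ht : 0 ≤ t)
    (hR : s + t = R) (hRpos : 0 < R) (hε : 0 < ε) (hc : c₁^2 + c₂^2 = 1)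
    (hnv : 0 ≤ nv) (hAB : (A - B)^2 + 4*W^2 = 4*nv^2)
    (hcon : (A*t + B*s)^2 ≤ 4*s*t*W^2) :
    c₁ * (A/2/(2*Real.sqrt (s+ε))) + c₂ * (B/2/(2*Real.sqrt (t+ε)))
      ≤ nv/(2*Real.sqrt R) := by
  have hcore := core_ineq s t ε A B W hs ht hε (hR ▸ hRpos) hcon
  set u1 : ℝ := Real.sqrt (s + ε) with hu1
  set u2 : ℝ := Real.sqrt (t + ε) with hu2
  have hu1pos : 0 < u1 := Real.sqrt_pos.2 (by linarith)
  have hu2pos : 0 < u2 := Real.sqrt_pos.2 (by linarith)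
  have hu1sq : u1^2 = s + ε := Real.sq_sqrt (by linarith)
  have hu2sq : u2^2 = t + ε := Real.sq_sqrt (by linarith)
  set X : ℝ := A/2/(2*u1) with hX
  set Y : ℝ := B/2/(2*u2) with hY
  have hXsq : X^2 = A^2/(s+ε)/16 := by
    rw [hX, div_pow, div_pow, mul_pow, hu1sq, div_div, div_div]
    congr 1
    ring
  have hYsq : Y^2 = B^2/(t+ε)/16 := by
    rw [hY, div_pow, div_pow, mul_pow, hu2sq, div_div, div_div]
    congr 1
    ring
  have hXY2 : X^2 + Y^2 ≤ nv^2 / (4*R) := by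
    rw [hXsq, hYsq]
    calc A^2/(s+ε)/16 + B^2/(t+ε)/16 = (A^2/(s+ε) + B^2/(t+ε))/16 := by ring
      _ ≤ (((A-B)^2 + 4*W^2)/(s+t))/16 := by linarith
      _ = nv^2/(4*R) := by rw [hAB, hR]; ring
  have h1 : (c₁*X + c₂*Y)^2 ≤ X^2 + Y^2 := by nlinarith [sq_nonneg (c₁*Y - c₂*X)]
  have h2 : c₁*X + c₂*Y ≤ Real.sqrt ((c₁*X+c₂*Y)^2) := by
    rw [Real.sqrt_sq_eq_abs]; exact le_abs_self _
  have h3 : Real.sqrt ((c₁*X+c₂*Y)^2) ≤ Real.sqrt (nv^2/(4*R)) :=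
    Real.sqrt_le_sqrt (by linarith)
  have h4 : Real.sqrt (nv^2/(4*R)) = nv/(2*Real.sqrt R) := by
    rw [show nv^2/(4*R) = (nv/(2*Real.sqrt R))^2 by
      rw [div_pow, mul_pow, Real.sq_sqrt hRpos.le]; norm_num]
    exact Real.sqrt_sq (by positivity)
  linarith [h2.trans (h3.trans_eq h4)]

/-- Pointwise derivative bound (pure algebra). -/
lemma point_bound (y v e : EuclideanSpace ℝ (Fin N)) (c₁ c₂ ε : ℝ)
    (he : ‖e‖ = 1) (hy : y ≠ 0) (hε : 0 < ε) (hc : c₁^2 + c₂^2 = 1) :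
    c₁ * ((⟪y, v⟫/‖y‖ + ⟪v, e⟫)/2 / (2 * Real.sqrt ((‖y‖ + ⟪y, e⟫)/2 + ε)))
    + c₂ * ((⟪y, v⟫/‖y‖ - ⟪v, e⟫)/2 / (2 * Real.sqrt ((‖y‖ - ⟪y, e⟫)/2 + ε)))
    ≤ ‖v‖ / (2 * Real.sqrt ‖y‖) := by
  have hr : 0 < ‖y‖ := norm_pos_iff.2 hy
  have hple : |⟪y, e⟫| ≤ ‖y‖ := by
    calc |⟪y, e⟫| ≤ ‖y‖ * ‖e‖ := abs_real_inner_le_norm y e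
      _ = ‖y‖ := by rw [he, mul_one]
  obtain ⟨hpl, hpu⟩ := abs_le.1 hple
  have hvv : ⟪v, v⟫ = ‖v‖^2 := real_inner_self_eq_norm_sq v
  have hW2 : ‖v - ⟪v, e⟫ • e‖^2 = ‖v‖^2 - ⟪v, e⟫^2 := by
    rw [← real_inner_self_eq_norm_sq, inner_expand e v v he ⟪v, e⟫ ⟪v, e⟫, hvv]
    ring
  have hyy : ⟪y, y⟫ = ‖y‖^2 := real_inner_self_eq_norm_sq y
  have hwnorm : ‖y - ⟪y, e⟫ • e‖^2 = 4 * ((‖y‖ + ⟪y, e⟫)/2) * ((‖y‖ - ⟪y, e⟫)/2) := by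
    rw [← real_inner_self_eq_norm_sq, inner_expand e y y he ⟪y, e⟫ ⟪y, e⟫, hyy]
    ring
  have hww : ⟪y - ⟪y, e⟫ • e, v - ⟪v, e⟫ • e⟫ = ⟪y, v⟫ - ⟪y, e⟫ * ⟪v, e⟫ := by
    rw [inner_expand e y v he ⟪y, e⟫ ⟪v, e⟫]
    ring
  have hdiv : ⟪y, v⟫/‖y‖*‖y‖ = ⟪y, v⟫ := div_mul_cancel₀ _ (ne_of_gt hr)
  apply pb_scalar ((‖y‖ + ⟪y, e⟫)/2) ((‖y‖ - ⟪y, e⟫)/2)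
      (⟪y, v⟫/‖y‖ + ⟪v, e⟫) (⟪y, v⟫/‖y‖ - ⟪v, e⟫) ‖v - ⟪v, e⟫ • e‖ ‖v‖ ‖y‖ c₁ c₂ ε
      (by linarith) (by linarith) (by ring) hr hε hc (norm_nonneg v)
  · rw [hW2]; ring
  · have hcs := real_inner_mul_inner_self_le (y - ⟪y, e⟫ • e) (v - ⟪v, e⟫ • e)
    rw [hww, real_inner_self_eq_norm_sq, real_inner_self_eq_norm_sq, hwnorm] at hcs
    have habs : (⟪y, v⟫/‖y‖ + ⟪v, e⟫) * ((‖y‖ - ⟪y, e⟫)/2)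
        + (⟪y, v⟫/‖y‖ - ⟪v, e⟫) * ((‖y‖ + ⟪y, e⟫)/2)
        = ⟪y, v⟫ - ⟪y, e⟫ * ⟪v, e⟫ := by
      linear_combination hdiv
    rw [habs]
    calc (⟪y, v⟫ - ⟪y, e⟫ * ⟪v, e⟫)^2
        = (⟪y, v⟫ - ⟪y, e⟫ * ⟪v, e⟫) * (⟪y, v⟫ - ⟪y, e⟫ * ⟪v, e⟫) := by ring
      _ ≤ 4 * ((‖y‖ + ⟪y, e⟫)/2) * ((‖y‖ - ⟪y, e⟫)/2) * ‖v - ⟪v, e⟫ • e‖^2 := by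
          nlinarith [hcs]
      _ = _ := by ring

/-- Derivative of the lifted comparison function along the curve. -/
lemma hasDerivAt_h (γ : ℝ → EuclideanSpace ℝ (Fin N)) (e : EuclideanSpace ℝ (Fin N))
    (c₁ c₂ ε t : ℝ) (v : EuclideanSpace ℝ (Fin N)) (he : ‖e‖ = 1)
    (hγd : HasDerivAt γ v t) (h0 : γ t ≠ 0) (hε : 0 < ε) :
    HasDerivAt (fun τ => c₁ * Real.sqrt ((‖γ τ‖ + ⟪γ τ, e⟫)/2 + ε)
        + c₂ * Real.sqrt ((‖γ τ‖ - ⟪γ τ, e⟫)/2 + ε))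
      (c₁ * ((⟪γ t, v⟫/‖γ t‖ + ⟪v, e⟫)/2 / (2 * Real.sqrt ((‖γ t‖ + ⟪γ t, e⟫)/2 + ε)))
       + c₂ * ((⟪γ t, v⟫/‖γ t‖ - ⟪v, e⟫)/2 / (2 * Real.sqrt ((‖γ t‖ - ⟪γ t, e⟫)/2 + ε)))) t := by
  have hr : 0 < ‖γ t‖ := norm_pos_iff.2 h0
  have hple : |⟪γ t, e⟫| ≤ ‖γ t‖ := by
    calc |⟪γ t, e⟫| ≤ ‖γ t‖ * ‖e‖ := abs_real_inner_le_norm _ e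
      _ = ‖γ t‖ := by rw [he, mul_one]
  obtain ⟨hpl, hpu⟩ := abs_le.1 hple
  -- derivative of the norm
  have hnorm : HasDerivAt (fun τ => ‖γ τ‖) (⟪γ t, v⟫ / ‖γ t‖) t := by
    have hI : HasDerivAt (fun τ => ⟪γ τ, γ τ⟫) (⟪γ t, v⟫ + ⟪v, γ t⟫) t := hγd.inner ℝ hγd
    have hIpos : (0:ℝ) < ⟪γ t, γ t⟫ := by rw [real_inner_self_eq_norm_sq]; positivity
    have hs := (Real.hasDerivAt_sqrt (ne_of_gt hIpos)).comp t hI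
    have hfun : (fun τ => Real.sqrt ⟪γ τ, γ τ⟫) = fun τ => ‖γ τ‖ := funext fun τ => by
      rw [real_inner_self_eq_norm_mul_norm, Real.sqrt_mul_self (norm_nonneg _)]
    have hs' : HasDerivAt (fun τ => ‖γ τ‖)
        (1/(2*Real.sqrt ⟪γ t, γ t⟫) * (⟪γ t, v⟫ + ⟪v, γ t⟫)) t := by
      rw [← hfun]; exact hs
    convert hs' using 1
    rw [real_inner_self_eq_norm_mul_norm, Real.sqrt_mul_self (norm_nonneg _),
      real_inner_comm v (γ t)]
    set q : ℝ := ⟪γ t, v⟫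
    set r : ℝ := ‖γ t‖
    field_simp
    ring
  have hp : HasDerivAt (fun τ => ⟪γ τ, e⟫) ⟪v, e⟫ t := by
    simpa using hγd.inner ℝ (hasDerivAt_const t e)
  have hpos1 : (0:ℝ) < (‖γ t‖ + ⟪γ t, e⟫)/2 + ε := by linarith
  have hpos2 : (0:ℝ) < (‖γ t‖ - ⟪γ t, e⟫)/2 + ε := by linarith
  have hq1 : HasDerivAt (fun τ => (‖γ τ‖ + ⟪γ τ, e⟫)/2 + ε)
      ((⟪γ t, v⟫/‖γ t‖ + ⟪v, e⟫)/2) t := ((hnorm.add hp).div_const 2).add_const ε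
  have hq2 : HasDerivAt (fun τ => (‖γ τ‖ - ⟪γ τ, e⟫)/2 + ε)
      ((⟪γ t, v⟫/‖γ t‖ - ⟪v, e⟫)/2) t := ((hnorm.sub hp).div_const 2).add_const ε
  have hu : HasDerivAt (fun τ => Real.sqrt ((‖γ τ‖ + ⟪γ τ, e⟫)/2 + ε))
      (1/(2*Real.sqrt ((‖γ t‖ + ⟪γ t, e⟫)/2 + ε)) * ((⟪γ t, v⟫/‖γ t‖ + ⟪v, e⟫)/2)) t :=
    (Real.hasDerivAt_sqrt (ne_of_gt hpos1)).comp t hq1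
  have hv : HasDerivAt (fun τ => Real.sqrt ((‖γ τ‖ - ⟪γ τ, e⟫)/2 + ε))
      (1/(2*Real.sqrt ((‖γ t‖ - ⟪γ t, e⟫)/2 + ε)) * ((⟪γ t, v⟫/‖γ t‖ - ⟪v, e⟫)/2)) t :=
    (Real.hasDerivAt_sqrt (ne_of_gt hpos2)).comp t hq2
  have := (hu.const_mul c₁).add (hv.const_mul c₂)
  refine this.congr_deriv ?_
  set S1 : ℝ := Real.sqrt ((‖γ t‖ + ⟪γ t, e⟫)/2 + ε)
  set S2 : ℝ := Real.sqrt ((‖γ t‖ - ⟪γ t, e⟫)/2 + ε)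
  set D1 : ℝ := ⟪γ t, v⟫/‖γ t‖ + ⟪v, e⟫
  set D2 : ℝ := ⟪γ t, v⟫/‖γ t‖ - ⟪v, e⟫
  ring

lemma deriv_eq_G (γ : ℝ → EuclideanSpace ℝ (Fin N)) (a b : ℝ) (hab : a < b)
    (hγ : ContDiffOn ℝ 1 γ (Set.Icc a b)) :
    ∀ t ∈ Ioo a b, HasDerivAt γ (derivWithin γ (Icc a b) t) t := by
  intro t ht
  have hmem : Icc a b ∈ nhds t := Icc_mem_nhds ht.1 ht.2
  have hd : DifferentiableAt ℝ γ t := (hγ.contDiffAt hmem).differentiableAt one_ne_zero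
  have heq : derivWithin γ (Icc a b) t = deriv γ t :=
    hd.derivWithin ((uniqueDiffOn_Icc hab) t (Ioo_subset_Icc_self ht))
  rw [heq]; exact hd.hasDerivAt

lemma ae_ne_right (b : ℝ) : ∀ᵐ (t : ℝ) ∂volume, t ≠ b := by
  have hb : volume ({b} : Set ℝ) = 0 := measure_singleton b
  rw [ae_iff]
  convert hb using 2
  ext t; simp

lemma ae_restrict_Ioc_of_Ioo {f g : ℝ → ℝ} (a b : ℝ)
    (h : ∀ t ∈ Ioo a b, f t = g t) :
    f =ᵐ[volume.restrict (Ioc a b)] g := by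
  filter_upwards [ae_restrict_mem measurableSet_Ioc,
    ae_restrict_of_ae (ae_ne_right b)] with t ht hb'
  exact h t ⟨ht.1, lt_of_le_of_ne ht.2 hb'⟩

lemma ae_uIoc_of_Ioo {f g : ℝ → ℝ} (a b : ℝ) (hab : a ≤ b)
    (h : ∀ t ∈ Ioo a b, f t = g t) :
    ∀ᵐ x ∂volume, x ∈ Set.uIoc a b → f x = g x := by
  filter_upwards [ae_ne_right b] with t hb' ht
  rw [Set.uIoc_of_le hab] at ht
  exact h t ⟨ht.1, lt_of_le_of_ne ht.2 hb'⟩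

lemma piece_integrable (γ : ℝ → EuclideanSpace ℝ (Fin N)) (a b : ℝ) (hab : a < b)
    (hγ : ContDiffOn ℝ 1 γ (Set.Icc a b)) (h0 : ∀ t ∈ Set.Icc a b, γ t ≠ 0) :
    IntervalIntegrable (fun t => ‖deriv γ t‖ / (2 * Real.sqrt ‖γ t‖)) volume a b := by
  have hGc : ContinuousOn (derivWithin γ (Icc a b)) (Icc a b) :=
    hγ.continuousOn_derivWithin (uniqueDiffOn_Icc hab) le_rfl
  have hgc : ContinuousOn (fun t => ‖derivWithin γ (Icc a b) t‖ / (2 * Real.sqrt ‖γ t‖))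
      (Icc a b) := by
    apply hGc.norm.div
    · exact continuousOn_const.mul (Real.continuous_sqrt.comp_continuousOn hγ.continuousOn.norm)
    · intro t ht
      have : 0 < ‖γ t‖ := norm_pos_iff.2 (h0 t ht)
      positivity
  rw [intervalIntegrable_iff_integrableOn_Ioc_of_le hab.le]
  refine (hgc.integrableOn_Icc.mono_set Ioc_subset_Icc_self).congr ?_
  apply ae_restrict_Ioc_of_Ioo
  intro t ht
  rw [(deriv_eq_G γ a b hab hγ t ht).deriv]

lemma piece_bound (γ : ℝ → EuclideanSpace ℝ (Fin N)) (e : EuclideanSpace ℝ (Fin N))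
    (he : ‖e‖ = 1) (a b : ℝ) (hab : a < b)
    (hγ : ContDiffOn ℝ 1 γ (Set.Icc a b)) (h0 : ∀ t ∈ Set.Icc a b, γ t ≠ 0)
    (c₁ c₂ ε : ℝ) (hε : 0 < ε) (hc : c₁^2 + c₂^2 = 1) :
    (c₁ * Real.sqrt ((‖γ b‖ + ⟪γ b, e⟫)/2 + ε) + c₂ * Real.sqrt ((‖γ b‖ - ⟪γ b, e⟫)/2 + ε))
    - (c₁ * Real.sqrt ((‖γ a‖ + ⟪γ a, e⟫)/2 + ε) + c₂ * Real.sqrt ((‖γ a‖ - ⟪γ a, e⟫)/2 + ε))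
    ≤ ∫ t in a..b, ‖deriv γ t‖ / (2 * Real.sqrt ‖γ t‖) := by
  set G : ℝ → EuclideanSpace ℝ (Fin N) := derivWithin γ (Icc a b) with hGdef
  have hGc : ContinuousOn G (Icc a b) :=
    hγ.continuousOn_derivWithin (uniqueDiffOn_Icc hab) le_rfl
  -- positivity facts on Icc
  have hple : ∀ t ∈ Icc a b, |⟪γ t, e⟫| ≤ ‖γ t‖ := by
    intro t ht
    calc |⟪γ t, e⟫| ≤ ‖γ t‖ * ‖e‖ := abs_real_inner_le_norm _ e
      _ = ‖γ t‖ := by rw [he, mul_one]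
  have hpos1 : ∀ t ∈ Icc a b, (0:ℝ) < (‖γ t‖ + ⟪γ t, e⟫)/2 + ε := by
    intro t ht; have := abs_le.1 (hple t ht); linarith [this.1]
  have hpos2 : ∀ t ∈ Icc a b, (0:ℝ) < (‖γ t‖ - ⟪γ t, e⟫)/2 + ε := by
    intro t ht; have := abs_le.1 (hple t ht); linarith [this.2]
  set h : ℝ → ℝ := fun τ => c₁ * Real.sqrt ((‖γ τ‖ + ⟪γ τ, e⟫)/2 + ε)
      + c₂ * Real.sqrt ((‖γ τ‖ - ⟪γ τ, e⟫)/2 + ε) with hhdef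
  set H : ℝ → ℝ := fun t =>
      c₁ * ((⟪γ t, G t⟫/‖γ t‖ + ⟪G t, e⟫)/2 / (2 * Real.sqrt ((‖γ t‖ + ⟪γ t, e⟫)/2 + ε)))
      + c₂ * ((⟪γ t, G t⟫/‖γ t‖ - ⟪G t, e⟫)/2 / (2 * Real.sqrt ((‖γ t‖ - ⟪γ t, e⟫)/2 + ε)))
    with hHdef
  set g : ℝ → ℝ := fun t => ‖G t‖ / (2 * Real.sqrt ‖γ t‖) with hgdef
  -- continuity of h on Icc
  have hcontn : ContinuousOn (fun τ => ‖γ τ‖) (Icc a b) := hγ.continuousOn.norm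
  have hcontp : ContinuousOn (fun τ => ⟪γ τ, e⟫) (Icc a b) :=
    hγ.continuousOn.inner continuousOn_const
  have hconth : ContinuousOn h (Icc a b) := by
    apply ContinuousOn.add
    · exact continuousOn_const.mul (Real.continuous_sqrt.comp_continuousOn
        (((hcontn.add hcontp).div_const 2).add continuousOn_const))
    · exact continuousOn_const.mul (Real.continuous_sqrt.comp_continuousOn
        (((hcontn.sub hcontp).div_const 2).add continuousOn_const))
  -- continuity of H and g on Icc
  have hcontq : ContinuousOn (fun t => ⟪γ t, G t⟫) (Icc a b) := hγ.continuousOn.inner hGc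
  have hcontpG : ContinuousOn (fun t => ⟪G t, e⟫) (Icc a b) := hGc.inner continuousOn_const
  have hnorm_ne : ∀ t ∈ Icc a b, ‖γ t‖ ≠ 0 := fun t ht => (norm_pos_iff.2 (h0 t ht)).ne'
  have hcontH : ContinuousOn H (Icc a b) := by
    apply ContinuousOn.add
    · apply continuousOn_const.mul
      apply ContinuousOn.div
      · exact ((hcontq.div hcontn hnorm_ne).add hcontpG).div_const 2
      · exact continuousOn_const.mul (Real.continuous_sqrt.comp_continuousOn
          (((hcontn.add hcontp).div_const 2).add continuousOn_const))
      · intro t ht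
        have := hpos1 t ht
        have hs : 0 < Real.sqrt ((‖γ t‖ + ⟪γ t, e⟫)/2 + ε) := Real.sqrt_pos.2 this
        positivity
    · apply continuousOn_const.mul
      apply ContinuousOn.div
      · exact ((hcontq.div hcontn hnorm_ne).sub hcontpG).div_const 2
      · exact continuousOn_const.mul (Real.continuous_sqrt.comp_continuousOn
          (((hcontn.sub hcontp).div_const 2).add continuousOn_const))
      · intro t ht
        have := hpos2 t ht
        have hs : 0 < Real.sqrt ((‖γ t‖ - ⟪γ t, e⟫)/2 + ε) := Real.sqrt_pos.2 this
        positivity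
  have hcontg : ContinuousOn g (Icc a b) := by
    apply hGc.norm.div
    · exact continuousOn_const.mul (Real.continuous_sqrt.comp_continuousOn hcontn)
    · intro t ht
      have : 0 < ‖γ t‖ := norm_pos_iff.2 (h0 t ht)
      positivity
  have hHint : IntervalIntegrable H volume a b :=
    (intervalIntegrable_iff_integrableOn_Icc_of_le hab.le).2 hcontH.integrableOn_Icc
  have hgint : IntervalIntegrable g volume a b :=
    (intervalIntegrable_iff_integrableOn_Icc_of_le hab.le).2 hcontg.integrableOn_Icc
  -- FTC
  have hftc : ∫ t in a..b, H t = h b - h a := by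
    apply intervalIntegral.integral_eq_sub_of_hasDeriv_right_of_le hab.le hconth _ hHint
    intro t ht
    have hd := deriv_eq_G γ a b hab hγ t ht
    exact (hasDerivAt_h γ e c₁ c₂ ε t (G t) he hd (h0 t (Ioo_subset_Icc_self ht))
      hε).hasDerivWithinAt
  -- pointwise bound H ≤ g on Icc
  have hHg : ∀ t ∈ Icc a b, H t ≤ g t := fun t ht =>
    point_bound (γ t) (G t) e c₁ c₂ ε he (h0 t ht) hε hc
  have hmono : ∫ t in a..b, H t ≤ ∫ t in a..b, g t :=
    intervalIntegral.integral_mono_on hab.le hHint hgint hHg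
  -- replace g by the deriv version
  have hcongr : ∫ t in a..b, g t = ∫ t in a..b, ‖deriv γ t‖ / (2 * Real.sqrt ‖γ t‖) := by
    apply intervalIntegral.integral_congr_ae
    apply ae_uIoc_of_Ioo a b hab.le
    intro t ht
    rw [hgdef]
    simp only
    rw [(deriv_eq_G γ a b hab hγ t ht).deriv]
  have hfin : h b - h a ≤ ∫ t in a..b, ‖deriv γ t‖ / (2 * Real.sqrt ‖γ t‖) := by
    calc h b - h a = ∫ t in a..b, H t := hftc.symm
      _ ≤ ∫ t in a..b, g t := hmono
      _ = _ := hcongr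
  exact hfin

/-- `γ` is piecewise continuously differentiable on `[0,1]`: it is continuous there and
there is a partition `0 = p 0 < p 1 < ⋯ < p n = 1` such that `γ` is `C¹` on each piece. -/
def PiecewiseC1 {N : ℕ} (γ : ℝ → EuclideanSpace ℝ (Fin N)) : Prop :=
  ContinuousOn γ (Set.Icc 0 1) ∧
    ∃ (n : ℕ) (p : Fin (n + 1) → ℝ), StrictMono p ∧ p 0 = 0 ∧ p (Fin.last n) = 1 ∧
      ∀ i : Fin n, ContDiffOn ℝ 1 γ (Set.Icc (p i.castSucc) (p i.succ))

set_option maxHeartbeats 1000000 in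
/-- the conformal length (density `1/√(2|x|)`) of any piecewise `C¹` curve
from `x₀` to `x` avoiding the origin is at least `√2 · d(x, x₀)`. -/
theorem statement3 (N : ℕ) (hN : 1 ≤ N) (x₀ x : EuclideanSpace ℝ (Fin N))
    (hx₀ : x₀ ≠ 0) (hx : x ≠ 0)
    (γ : ℝ → EuclideanSpace ℝ (Fin N))
    (hγ : PiecewiseC1 γ)
    (hne : ∀ t ∈ Set.Icc (0 : ℝ) 1, γ t ≠ 0)
    (hγ0 : γ 0 = x₀) (hγ1 : γ 1 = x) :
    (∫ t in (0 : ℝ)..1, ‖deriv γ t‖ / Real.sqrt (2 * ‖γ t‖)) ≥ Real.sqrt 2 * dkOne x x₀ := by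
  obtain ⟨hcont, n, p, hpm, hp0, hpl, hpC1⟩ := hγ
  have hx₀n : 0 < ‖x₀‖ := norm_pos_iff.2 hx₀
  set e : EuclideanSpace ℝ (Fin N) := ‖x₀‖⁻¹ • x₀ with hedef
  have he : ‖e‖ = 1 := by
    rw [hedef, norm_smul, norm_inv, norm_norm]
    field_simp
  have hx₀e : ⟪x₀, e⟫ = ‖x₀‖ := by
    rw [hedef, real_inner_smul_right, real_inner_self_eq_norm_sq]
    field_simp
  have hxx₀ : (⟪x, x₀⟫ : ℝ) = ‖x₀‖ * ⟪x, e⟫ := by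
    rw [hedef, real_inner_smul_right]
    field_simp
  -- partition machinery
  set P : ℕ → ℝ := fun k => p ⟨min k n, Nat.lt_succ_of_le (min_le_right k n)⟩ with hPdef
  have hPeq : ∀ k (hk : k ≤ n), P k = p ⟨k, Nat.lt_succ_of_le hk⟩ := by
    intro k hk
    simp only [hPdef]
    congr 1
    exact Fin.ext (by simp [min_eq_left hk])
  have hP0 : P 0 = 0 := by
    rw [hPeq 0 (Nat.zero_le n)]
    convert hp0 using 2
    exact Fin.ext (by simp)
  have hPn : P n = 1 := by
    rw [hPeq n le_rfl]
    convert hpl using 2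
    exact Fin.ext (by simp)
  have hPlt : ∀ k, k < n → P k < P (k+1) := by
    intro k hk
    rw [hPeq k hk.le, hPeq (k+1) hk]
    exact hpm (by exact Fin.mk_lt_mk.2 (Nat.lt_succ_self k))
  have hPmem : ∀ k, k ≤ n → P k ∈ Icc (0:ℝ) 1 := by
    intro k hk
    rw [hPeq k hk]
    constructor
    · rw [← hp0]; exact hpm.monotone (Fin.zero_le _)
    · rw [← hpl]; exact hpm.monotone (Fin.le_last _)
  have hsub : ∀ k, k < n → Icc (P k) (P (k+1)) ⊆ Icc (0:ℝ) 1 := fun k hk =>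
    Icc_subset_Icc (hPmem k hk.le).1 (hPmem (k+1) hk).2
  have hC1 : ∀ k, k < n → ContDiffOn ℝ 1 γ (Icc (P k) (P (k+1))) := by
    intro k hk
    have h1 := hpC1 ⟨k, hk⟩
    have e1 : (⟨k, hk⟩ : Fin n).castSucc = (⟨k, Nat.lt_succ_of_le hk.le⟩ : Fin (n+1)) :=
      Fin.ext rfl
    have e2 : (⟨k, hk⟩ : Fin n).succ = (⟨k+1, Nat.succ_lt_succ hk⟩ : Fin (n+1)) :=
      Fin.ext rfl
    rw [e1, e2] at h1
    rwa [hPeq k hk.le, hPeq (k+1) hk]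
  set g : ℝ → ℝ := fun t => ‖deriv γ t‖ / (2 * Real.sqrt ‖γ t‖) with hgdef
  have hint : ∀ k, k < n → IntervalIntegrable g volume (P k) (P (k+1)) := fun k hk =>
    piece_integrable γ (P k) (P (k+1)) (hPlt k hk) (hC1 k hk)
      (fun t ht => hne t (hsub k hk ht))
  have hsum : ∑ k ∈ Finset.range n, (∫ t in P k..P (k+1), g t) = ∫ t in (0:ℝ)..1, g t := by
    rw [intervalIntegral.sum_integral_adjacent_intervals hint, hP0, hPn]
  have hgnonneg : (0:ℝ) ≤ ∫ t in (0:ℝ)..1, g t := by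
    apply intervalIntegral.integral_nonneg (by norm_num)
    intro u _
    simp only [hgdef]
    positivity
  -- abbreviations for endpoint data
  set A1 : ℝ := (‖x‖ + ⟪x, e⟫)/2 with hA1
  set B1 : ℝ := (‖x‖ - ⟪x, e⟫)/2 with hB1
  set A0 : ℝ := (‖x₀‖ + ⟪x₀, e⟫)/2 with hA0
  set B0 : ℝ := (‖x₀‖ - ⟪x₀, e⟫)/2 with hB0
  set φ : ℝ → ℝ := fun ε => Real.sqrt
      ((Real.sqrt (A1+ε) - Real.sqrt (A0+ε))^2 + (Real.sqrt (B1+ε) - Real.sqrt (B0+ε))^2)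
    with hφdef
  -- the key estimate for every ε > 0
  have key : ∀ ε, 0 < ε → φ ε ≤ ∫ t in (0:ℝ)..1, g t := by
    intro ε hε
    set Δu : ℝ := Real.sqrt (A1+ε) - Real.sqrt (A0+ε) with hΔu
    set Δv : ℝ := Real.sqrt (B1+ε) - Real.sqrt (B0+ε) with hΔv
    set m : ℝ := Real.sqrt (Δu^2 + Δv^2) with hm
    have hφε : φ ε = m := rfl
    rcases eq_or_lt_of_le (Real.sqrt_nonneg (Δu^2 + Δv^2)) with hm0 | hmpos
    · rw [hφε, hm, ← hm0]; exact hgnonneg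
    · rw [hφε]
      have hmsq : m^2 = Δu^2 + Δv^2 := Real.sq_sqrt (by positivity)
      set c₁ : ℝ := Δu/m with hc₁
      set c₂ : ℝ := Δv/m with hc₂
      have hmpos' : 0 < m := hm ▸ hmpos
      have hc : c₁^2 + c₂^2 = 1 := by
        rw [hc₁, hc₂, div_pow, div_pow, ← add_div, ← hmsq,
          div_self (pow_ne_zero 2 hmpos'.ne')]
      set F : ℝ → ℝ := fun τ => c₁ * Real.sqrt ((‖γ τ‖ + ⟪γ τ, e⟫)/2 + ε)
          + c₂ * Real.sqrt ((‖γ τ‖ - ⟪γ τ, e⟫)/2 + ε) with hF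
      have hpiece : ∀ k ∈ Finset.range n, F (P (k+1)) - F (P k) ≤ ∫ t in P k..P (k+1), g t := by
        intro k hk
        rw [Finset.mem_range] at hk
        exact piece_bound γ e he (P k) (P (k+1)) (hPlt k hk) (hC1 k hk)
          (fun t ht => hne t (hsub k hk ht)) c₁ c₂ ε hε hc
      have htel : ∑ k ∈ Finset.range n, (F (P (k+1)) - F (P k)) = F (P n) - F (P 0) :=
        Finset.sum_range_sub (fun k => F (P k)) n
      have hsumle : F (P n) - F (P 0) ≤ ∫ t in (0:ℝ)..1, g t := by
        rw [← htel, ← hsum]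
        exact Finset.sum_le_sum hpiece
      rw [hP0, hPn] at hsumle
      have hF1 : F 1 = c₁ * Real.sqrt (A1+ε) + c₂ * Real.sqrt (B1+ε) := by
        simp only [hF, hγ1, hA1, hB1]
      have hF0 : F 0 = c₁ * Real.sqrt (A0+ε) + c₂ * Real.sqrt (B0+ε) := by
        simp only [hF, hγ0, hA0, hB0]
      have hval : F 1 - F 0 = m := by
        have hstep : F 1 - F 0 = c₁ * Δu + c₂ * Δv := by
          rw [hF1, hF0, hΔu, hΔv]; ring
        rw [hstep, hc₁, hc₂]
        field_simp
        nlinarith [hmsq]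
      linarith [hsumle, hval]
  -- pass to the limit ε → 0⁺
  have hφc : Continuous φ := by
    rw [hφdef]
    fun_prop
  have htends : Filter.Tendsto φ (nhdsWithin 0 (Ioi 0)) (nhds (φ 0)) :=
    (hφc.tendsto 0).mono_left nhdsWithin_le_nhds
  have hdk : dkOne x x₀ = φ 0 := by
    have hxA : |⟪x, e⟫| ≤ ‖x‖ := by
      calc |⟪x, e⟫| ≤ ‖x‖ * ‖e‖ := abs_real_inner_le_norm _ e
        _ = ‖x‖ := by rw [he, mul_one]
    obtain ⟨hxl, hxu⟩ := abs_le.1 hxA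
    have hA1nn : 0 ≤ A1 := by rw [hA1]; linarith
    have hB1nn : 0 ≤ B1 := by rw [hB1]; linarith
    have hA0v : A0 = ‖x₀‖ := by rw [hA0, hx₀e]; ring
    have hB0v : B0 = 0 := by rw [hB0, hx₀e]; ring
    simp only [hφdef, add_zero]
    rw [hA0v, hB0v, Real.sqrt_zero, sub_zero]
    rw [dkOne]
    congr 1
    have hs1 : Real.sqrt B1 ^ 2 = B1 := Real.sq_sqrt hB1nn
    have hs2 : Real.sqrt A1 ^ 2 = A1 := Real.sq_sqrt hA1nn
    have hprod : Real.sqrt (2 * (‖x‖ * ‖x₀‖ + ⟪x, x₀⟫))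
        = 2 * (Real.sqrt A1 * Real.sqrt ‖x₀‖) := by
      rw [← Real.sqrt_mul hA1nn, hxx₀]
      rw [show (2:ℝ) * (‖x‖ * ‖x₀‖ + ‖x₀‖ * ⟪x, e⟫) = 4 * (A1 * ‖x₀‖) by rw [hA1]; ring]
      rw [show (4:ℝ) * (A1 * ‖x₀‖) = 2^2 * (A1 * ‖x₀‖) by norm_num]
      rw [Real.sqrt_mul (by norm_num : (0:ℝ) ≤ (2:ℝ)^2)]
      rw [Real.sqrt_sq (by norm_num : (0:ℝ) ≤ 2)]
    rw [hprod]
    have hsx0 : Real.sqrt ‖x₀‖ ^ 2 = ‖x₀‖ := Real.sq_sqrt hx₀n.le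
    nlinarith [hs1, hs2, hsx0]
  have hle : dkOne x x₀ ≤ ∫ t in (0:ℝ)..1, g t := by
    rw [hdk]
    refine le_of_tendsto htends ?_
    exact Filter.eventually_of_mem self_mem_nhdsWithin (fun ε hε => key ε hε)
  -- conclude
  have hintegrand : ∀ t, ‖deriv γ t‖ / Real.sqrt (2 * ‖γ t‖)
      = Real.sqrt 2 * (‖deriv γ t‖ / (2 * Real.sqrt ‖γ t‖)) := by
    intro t
    rw [Real.sqrt_mul (by norm_num : (0:ℝ) ≤ 2)]
    have hsq : (Real.sqrt 2)^2 = 2 := Real.sq_sqrt (by norm_num)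
    rcases eq_or_ne (Real.sqrt ‖γ t‖) 0 with hs | hs
    · rw [hs]; simp
    · have h2 : Real.sqrt 2 ≠ 0 := by positivity
      field_simp
      linear_combination (-(‖deriv γ t‖)) * hsq
  rw [ge_iff_le]
  calc Real.sqrt 2 * dkOne x x₀ ≤ Real.sqrt 2 * ∫ t in (0:ℝ)..1, g t :=
        mul_le_mul_of_nonneg_left hle (Real.sqrt_nonneg 2)
    _ = ∫ t in (0:ℝ)..1, Real.sqrt 2 * g t := (intervalIntegral.integral_const_mul _ _).symm
    _ = _ := by
        apply intervalIntegral.integral_congr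
        intro t _
        rw [hgdef]
        exact (hintegrand t).symm
end

section
/- Let N ≥ 2 and x, x₀ ∈ ℝ^N \ {0}. Then the infimum, over all piecewise continuously differentiable curves γ : [0,1] → ℝ^N \ {0} with γ(0) = x₀ and γ(1) = x, of the conformal length ∫₀¹ ‖γ′(t)‖ / √(2‖γ(t)‖) dt, equals √2 · d(x, x₀). In other words, for N ≥ 2 the function √2 d(x, x₀) coincides with the Riemannian distance L(x, x₀) determined by the conformal coefficient 1/√(2|x|). -/
noncomputable section
open Set Real MeasureTheory Filter Topology

namespace St4

variable {N : ℕ}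

lemma rad_nonneg (y z : EuclideanSpace ℝ (Fin N)) :
    0 ≤ 2 * (‖y‖ * ‖z‖ + (inner ℝ y z : ℝ)) := by
  have h := abs_real_inner_le_norm y z
  have := neg_le_of_abs_le h
  nlinarith [this]

lemma sqrt_rad_le (y z : EuclideanSpace ℝ (Fin N)) :
    Real.sqrt (2 * (‖y‖ * ‖z‖ + (inner ℝ y z : ℝ))) ≤ ‖y‖ + ‖z‖ := by
  have h := abs_real_inner_le_norm y z
  have h1 : (inner ℝ y z : ℝ) ≤ ‖y‖ * ‖z‖ := le_of_abs_le h
  have h2 : 2 * (‖y‖ * ‖z‖ + (inner ℝ y z : ℝ)) ≤ (‖y‖ + ‖z‖)^2 := by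
    nlinarith [sq_nonneg (‖y‖ - ‖z‖)]
  calc Real.sqrt (2 * (‖y‖ * ‖z‖ + (inner ℝ y z : ℝ))) ≤ Real.sqrt ((‖y‖ + ‖z‖)^2) :=
        Real.sqrt_le_sqrt h2
    _ = ‖y‖ + ‖z‖ := Real.sqrt_sq (by positivity)

/-- Key identity: `dkOne y z * sqrt(‖y‖+‖z‖+b) = ‖y - z‖`. -/
lemma dkOne_mul (y z : EuclideanSpace ℝ (Fin N)) :
    dkOne y z * Real.sqrt (‖y‖ + ‖z‖ + Real.sqrt (2 * (‖y‖ * ‖z‖ + (inner ℝ y z : ℝ))))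
      = ‖y - z‖ := by
  set b := Real.sqrt (2 * (‖y‖ * ‖z‖ + (inner ℝ y z : ℝ))) with hb
  have hb2 : b^2 = 2 * (‖y‖ * ‖z‖ + (inner ℝ y z : ℝ)) := Real.sq_sqrt (rad_nonneg y z)
  have h1 : 0 ≤ ‖y‖ + ‖z‖ - b := sub_nonneg.2 (sqrt_rad_le y z)
  have : dkOne y z * Real.sqrt (‖y‖ + ‖z‖ + b)
      = Real.sqrt ((‖y‖ + ‖z‖ - b) * (‖y‖ + ‖z‖ + b)) := by
    rw [dkOne, ← hb, Real.sqrt_mul h1]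
  rw [this]
  have hnorm : ‖y - z‖^2 = ‖y‖^2 - 2 * (inner ℝ y z : ℝ) + ‖z‖^2 := by
    rw [@norm_sub_sq_real]
  have : (‖y‖ + ‖z‖ - b) * (‖y‖ + ‖z‖ + b) = ‖y - z‖^2 := by
    rw [hnorm]; nlinarith [hb2]
  rw [this, Real.sqrt_sq (norm_nonneg _)]

lemma dkOne_self (y : EuclideanSpace ℝ (Fin N)) : dkOne y y = 0 := by
  have : (2 : ℝ) * (‖y‖ * ‖y‖ + (inner ℝ y y : ℝ)) = (2 * ‖y‖)^2 := by
    rw [real_inner_self_eq_norm_mul_norm]; ring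
  rw [dkOne, this, Real.sqrt_sq (by positivity)]
  have : ‖y‖ + ‖y‖ - 2 * ‖y‖ = 0 := by ring
  rw [this, Real.sqrt_zero]

lemma dkOne_nonneg (y z : EuclideanSpace ℝ (Fin N)) : 0 ≤ dkOne y z := Real.sqrt_nonneg _

/-- Strict positivity of the radicand `‖y‖+‖z‖-b` when `y ≠ z` (and not both are `0`). -/
lemma G_pos {y z : EuclideanSpace ℝ (Fin N)} (hyz : y ≠ z) :
    0 < ‖y‖ + ‖z‖ - Real.sqrt (2 * (‖y‖ * ‖z‖ + (inner ℝ y z : ℝ))) := by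
  rcases lt_or_eq_of_le (sub_nonneg.2 (sqrt_rad_le y z)) with h | h
  · exact h
  · exfalso
    have h0 : dkOne y z = 0 := by rw [dkOne, ← h, Real.sqrt_zero]
    have := dkOne_mul y z
    rw [h0, zero_mul] at this
    exact hyz (sub_eq_zero.1 (norm_eq_zero.1 this.symm))


lemma hasFDerivAt_norm_euclidean {y : EuclideanSpace ℝ (Fin N)} (hy : y ≠ 0) :
    HasFDerivAt (fun w : EuclideanSpace ℝ (Fin N) => ‖w‖) (innerSL ℝ ((‖y‖)⁻¹ • y)) y := by
  have hy2 : ‖y‖^2 ≠ 0 := pow_ne_zero _ (norm_ne_zero_iff.2 hy)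
  have h1 : HasFDerivAt (fun w : EuclideanSpace ℝ (Fin N) => ‖w‖^2) (2 • (innerSL ℝ y)) y :=
    (hasStrictFDerivAt_norm_sq y).hasFDerivAt
  have h2 := h1.sqrt hy2
  have e1 : (fun w : EuclideanSpace ℝ (Fin N) => Real.sqrt (‖w‖^2)) = fun w => ‖w‖ :=
    funext fun w => Real.sqrt_sq (norm_nonneg w)
  rw [e1] at h2
  refine h2.congr_fderiv ?_
  ext v
  simp only [innerSL_apply_apply, ContinuousLinearMap.coe_smul', Pi.smul_apply, smul_eq_mul,
    real_inner_smul_left, Real.sqrt_sq (norm_nonneg y)]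
  have : ‖y‖ ≠ 0 := norm_ne_zero_iff.2 hy
  field_simp
  ring

lemma dkOne_hasFDerivAt {x₀ y : EuclideanSpace ℝ (Fin N)} (hy : y ≠ 0)
    (hyx : y ≠ x₀) (hβ : 0 < 2 * (‖y‖ * ‖x₀‖ + (inner ℝ y x₀ : ℝ))) :
    ∃ w : EuclideanSpace ℝ (Fin N), ‖w‖ ≤ 1 / (2 * Real.sqrt ‖y‖) ∧
      HasFDerivAt (fun z => dkOne z x₀) (innerSL ℝ w) y := by
  have hr : (0:ℝ) < ‖y‖ := norm_pos_iff.2 hy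
  have hrne : ‖y‖ ≠ 0 := hr.ne'
  set r : ℝ := ‖y‖ with hrdef
  set s : ℝ := ‖x₀‖ with hsdef
  set b : ℝ := Real.sqrt (2 * (r * s + (inner ℝ y x₀ : ℝ))) with hbdef
  have hbpos : 0 < b := Real.sqrt_pos.2 hβ
  have hbne : b ≠ 0 := hbpos.ne'
  have hb2 : b^2 = 2 * (r * s + (inner ℝ y x₀ : ℝ)) := Real.sq_sqrt hβ.le
  have hGpos : 0 < r + s - b := G_pos hyx
  have hGne : r + s - b ≠ 0 := hGpos.ne'
  set G : ℝ := r + s - b with hGdef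
  have hsG : Real.sqrt G ≠ 0 := (Real.sqrt_pos.2 hGpos).ne'
  -- derivative of norm
  have A1 : HasFDerivAt (fun z : EuclideanSpace ℝ (Fin N) => ‖z‖)
      (innerSL ℝ (r⁻¹ • y)) y := hasFDerivAt_norm_euclidean hy
  -- derivative of inner
  have A2 : HasFDerivAt (fun z : EuclideanSpace ℝ (Fin N) => (inner ℝ z x₀ : ℝ))
      (innerSL ℝ x₀) y := by
    have h := (innerSL ℝ x₀).hasFDerivAt (x := y)
    have e : (fun z : EuclideanSpace ℝ (Fin N) => (inner ℝ z x₀ : ℝ)) = fun z => (innerSL ℝ x₀) z :=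
      funext fun z => by rw [innerSL_apply_apply, real_inner_comm]
    rw [e]
    exact h
  -- derivative of β
  have A3 : HasFDerivAt (fun z : EuclideanSpace ℝ (Fin N) => 2 * (‖z‖ * s + (inner ℝ z x₀ : ℝ)))
      ((2*s) • innerSL ℝ (r⁻¹ • y) + (2:ℝ) • innerSL ℝ x₀) y := by
    have h := ((A1.const_mul (2*s)).add (A2.const_mul (2:ℝ)))
    have e : (fun z : EuclideanSpace ℝ (Fin N) => 2 * (‖z‖ * s + (inner ℝ z x₀ : ℝ)))
        = fun z => (2*s) * ‖z‖ + 2 * (inner ℝ z x₀ : ℝ) := funext fun z => by ring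
    rw [e]
    exact h
  -- derivative of √β
  have hβy : 2 * (‖y‖ * s + (inner ℝ y x₀ : ℝ)) ≠ 0 := by rw [← hrdef]; exact hβ.ne'
  have A4 := A3.sqrt hβy
  -- derivative of G and of dkOne
  have A5 := ((A1.add_const s).sub A4).sqrt (by
    show ‖y‖ + s - Real.sqrt (2 * (‖y‖ * s + (inner ℝ y x₀ : ℝ))) ≠ 0
    rw [← hrdef, ← hbdef]
    exact hGne)
  set w : EuclideanSpace ℝ (Fin N) :=
    (2 * Real.sqrt G)⁻¹ • ((r⁻¹ - b⁻¹ * s * r⁻¹) • y - b⁻¹ • x₀) with hwdef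
  refine ⟨w, ?_, ?_⟩
  · -- norm bound
    have hw0 : ‖(r⁻¹ - b⁻¹ * s * r⁻¹) • y - b⁻¹ • x₀‖^2 = G / r := by
      rw [@norm_sub_sq_real, norm_smul, norm_smul, real_inner_smul_left, real_inner_smul_right]
      have h1 : ‖(r⁻¹ - b⁻¹ * s * r⁻¹)‖^2 = (r⁻¹ - b⁻¹ * s * r⁻¹)^2 := sq_abs _
      have h2 : ‖b⁻¹‖^2 = (b⁻¹)^2 := sq_abs _
      have hin : (inner ℝ y x₀ : ℝ) = b^2/2 - s*r := by rw [hb2]; ring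
      rw [mul_pow, mul_pow, h1, h2, ← hrdef, ← hsdef, hin, hGdef]
      field_simp
      ring
    have hwn : ‖w‖^2 = 1 / (4 * r) := by
      rw [hwdef, norm_smul, mul_pow, hw0, Real.norm_eq_abs, sq_abs]
      rw [inv_pow, mul_pow, Real.sq_sqrt hGpos.le]
      field_simp
      ring
    have : ‖w‖ = 1 / (2 * Real.sqrt r) := by
      have h48 : ((1:ℝ)/(2 * Real.sqrt r))^2 = 1/(4*r) := by
        rw [div_pow, mul_pow, Real.sq_sqrt hr.le]; norm_num
      have := congrArg Real.sqrt (hwn.trans h48.symm)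
      rwa [Real.sqrt_sq (norm_nonneg w), Real.sqrt_sq (by positivity)] at this
    rw [this]
  · -- the derivative
    have e : (fun z => dkOne z x₀)
        = fun z : EuclideanSpace ℝ (Fin N) =>
            Real.sqrt (‖z‖ + s - Real.sqrt (2 * (‖z‖ * s + (inner ℝ z x₀ : ℝ)))) := by
      funext z; rw [dkOne, hsdef]
    rw [e]
    refine A5.congr_fderiv ?_
    ext v
    simp only [innerSL_apply_apply, ContinuousLinearMap.coe_smul', Pi.smul_apply, smul_eq_mul,
      ContinuousLinearMap.coe_sub', Pi.sub_apply, ContinuousLinearMap.add_apply,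
      real_inner_smul_left, inner_sub_left, inner_add_left]
    have hby : Real.sqrt (2 * (‖y‖ * s + (inner ℝ y x₀ : ℝ))) = b := by rw [hbdef, hrdef]
    have hGy : ‖y‖ + s - Real.sqrt (2 * (‖y‖ * s + (inner ℝ y x₀ : ℝ))) = G := by
      rw [hby, ← hrdef, hGdef]
    rw [hby, hGy, hwdef, real_inner_smul_left, inner_sub_left, real_inner_smul_left,
      real_inner_smul_left]
    field_simp
    ring


lemma sqrt_sub_le' {A B : ℝ} (hA : 0 ≤ A) (hB : 0 < B) :
    Real.sqrt A - Real.sqrt B ≤ (A - B) / (2 * Real.sqrt B) := by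
  have h1 : 0 < Real.sqrt B := Real.sqrt_pos.2 hB
  rw [le_div_iff₀ (by positivity : (0:ℝ) < 2 * Real.sqrt B)]
  nlinarith [Real.sq_sqrt hA, Real.sq_sqrt hB.le, sq_nonneg (Real.sqrt A - Real.sqrt B),
    Real.sqrt_nonneg A]

lemma sqrt2_div_helper (A s' : ℝ) :
    Real.sqrt 2 * A / (2 * Real.sqrt s') = A / Real.sqrt (2 * s') := by
  rw [Real.sqrt_mul (by norm_num : (0:ℝ) ≤ 2)]
  rw [show (2:ℝ) * Real.sqrt s' = Real.sqrt 2 * (Real.sqrt 2 * Real.sqrt s') by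
    rw [← mul_assoc, Real.mul_self_sqrt (by norm_num : (0:ℝ) ≤ 2)]]
  rw [mul_div_mul_left _ _ (by positivity : Real.sqrt 2 ≠ 0)]

/-- Denominator in the `dkOne` identity. -/
def DD {N : ℕ} (x₀ : EuclideanSpace ℝ (Fin N)) (w : EuclideanSpace ℝ (Fin N)) : ℝ :=
  Real.sqrt (‖w‖ + ‖x₀‖ + Real.sqrt (2 * (‖w‖ * ‖x₀‖ + (inner ℝ w x₀ : ℝ))))

lemma DD_pos {x₀ : EuclideanSpace ℝ (Fin N)} (hx₀ : x₀ ≠ 0) (w : EuclideanSpace ℝ (Fin N)) :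
    0 < DD x₀ w := by
  have hs : (0:ℝ) < ‖x₀‖ := norm_pos_iff.2 hx₀
  have : (0:ℝ) < ‖w‖ + ‖x₀‖ + Real.sqrt (2 * (‖w‖ * ‖x₀‖ + (inner ℝ w x₀ : ℝ))) := by
    have := Real.sqrt_nonneg (2 * (‖w‖ * ‖x₀‖ + (inner ℝ w x₀ : ℝ)))
    have := norm_nonneg w
    linarith
  exact Real.sqrt_pos.2 this

lemma dkOne_eq_div {x₀ : EuclideanSpace ℝ (Fin N)} (hx₀ : x₀ ≠ 0)
    (w : EuclideanSpace ℝ (Fin N)) : dkOne w x₀ = ‖w - x₀‖ / DD x₀ w :=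
  (eq_div_iff (DD_pos hx₀ w).ne').2 (dkOne_mul w x₀)

lemma DD_continuous (x₀ : EuclideanSpace ℝ (Fin N)) : Continuous (DD x₀) := by
  apply Real.continuous_sqrt.comp
  exact (continuous_norm.add continuous_const).add
    (Real.continuous_sqrt.comp (continuous_const.mul
      ((continuous_norm.mul continuous_const).add ((continuous_id.inner continuous_const)))))

lemma dkOne_continuous (x₀ : EuclideanSpace ℝ (Fin N)) :
    Continuous (fun z : EuclideanSpace ℝ (Fin N) => dkOne z x₀) := by
  apply Real.continuous_sqrt.comp
  exact (continuous_norm.add continuous_const).sub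
    (Real.continuous_sqrt.comp (continuous_const.mul
      ((continuous_norm.mul continuous_const).add ((continuous_id.inner continuous_const)))))

lemma DD_at_x₀ {x₀ : EuclideanSpace ℝ (Fin N)} (hx₀ : x₀ ≠ 0) :
    DD x₀ x₀ = 2 * Real.sqrt ‖x₀‖ := by
  have hs : (0:ℝ) < ‖x₀‖ := norm_pos_iff.2 hx₀
  have h1 : (2 : ℝ) * (‖x₀‖ * ‖x₀‖ + (inner ℝ x₀ x₀ : ℝ)) = (2*‖x₀‖)^2 := by
    rw [real_inner_self_eq_norm_mul_norm]; ring
  rw [DD, h1, Real.sqrt_sq (by positivity)]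
  have h2 : ‖x₀‖ + ‖x₀‖ + 2*‖x₀‖ = (2 * Real.sqrt ‖x₀‖)^2 := by
    rw [mul_pow, Real.sq_sqrt hs.le]; ring
  rw [h2, Real.sqrt_sq (by positivity)]

lemma piece_bound {γ : ℝ → EuclideanSpace ℝ (Fin N)} {a b : ℝ} (hab : a < b)
    {x₀ : EuclideanSpace ℝ (Fin N)} (hx₀ : x₀ ≠ 0)
    (hγ : ContDiffOn ℝ 1 γ (Icc a b)) (hne : ∀ t ∈ Icc a b, γ t ≠ 0) :
    Real.sqrt 2 * dkOne (γ b) x₀ - Real.sqrt 2 * dkOne (γ a) x₀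
      ≤ ∫ t in a..b, ‖deriv γ t‖ / Real.sqrt (2 * ‖γ t‖) := by
  have hs : (0:ℝ) < ‖x₀‖ := norm_pos_iff.2 hx₀
  have hd : DifferentiableOn ℝ γ (Icc a b) := hγ.differentiableOn one_ne_zero
  set v : ℝ → EuclideanSpace ℝ (Fin N) := fun t => derivWithin γ (Icc a b) t with hv
  have hvc : ContinuousOn v (Icc a b) :=
    hγ.continuousOn_derivWithin (uniqueDiffOn_Icc hab) le_rfl
  set proj : ℝ → ℝ := fun t => max a (min b t) with hproj
  have hproj_cont : Continuous proj := continuous_const.max (continuous_const.min continuous_id)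
  have hmem : ∀ t, proj t ∈ Icc a b := fun t => ⟨le_max_left _ _,
    max_le hab.le (min_le_left _ _)⟩
  have hproj_id : ∀ t ∈ Icc a b, proj t = t := fun t ht => by
    rw [hproj]; simp only [min_eq_right ht.2, max_eq_right ht.1]
  set φ : ℝ → ℝ := fun t => ‖v (proj t)‖ / Real.sqrt (2 * ‖γ (proj t)‖) with hφdef
  have hγproj : Continuous (fun t => γ (proj t)) :=
    hγ.continuousOn.comp_continuous hproj_cont hmem
  have hφ : Continuous φ := by
    apply ((hvc.comp_continuous hproj_cont hmem).norm).div
      (Real.continuous_sqrt.comp (continuous_const.mul hγproj.norm))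
    intro t
    have h0 : (0:ℝ) < ‖γ (proj t)‖ := norm_pos_iff.2 (hne _ (hmem t))
    have h1 : (0:ℝ) < 2 * ‖γ (proj t)‖ := by linarith
    simpa using (Real.sqrt_pos.2 h1).ne'
  set f : ℝ → ℝ := fun t => Real.sqrt 2 * dkOne (γ t) x₀ with hfdef
  have hfc : ContinuousOn f (Icc a b) :=
    continuousOn_const.mul ((dkOne_continuous x₀).comp_continuousOn hγ.continuousOn)
  set B : ℝ → ℝ := fun t => f a + ∫ u in a..t, φ u with hBdef
  have hB' : ∀ t, HasDerivAt B (φ t) t := by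
    intro t
    exact (intervalIntegral.integral_hasDerivAt_right (hφ.intervalIntegrable a t)
      (hφ.stronglyMeasurableAtFilter volume (𝓝 t)) hφ.continuousAt).const_add (f a)
  have bound : ∀ t ∈ Ico a b, ∀ r, φ t < r → ∃ᶠ z in 𝓝[>] t, slope f t z < r := by
    intro t ht r hr
    have htIcc : t ∈ Icc a b := ⟨ht.1, ht.2.le⟩
    have hproj_t : proj t = t := hproj_id t htIcc
    have hyne : γ t ≠ 0 := hne t htIcc
    have hr0 : (0:ℝ) < ‖γ t‖ := norm_pos_iff.2 hyne
    have hγd : HasDerivWithinAt γ (v t) (Icc a b) t := (hd t htIcc).hasDerivWithinAt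
    have hne_bot : (𝓝[Ioo t b] t).NeBot := left_nhdsWithin_Ioo_neBot ht.2
    have hmono : 𝓝[Ioo t b] t ≤ 𝓝[>] t := nhdsWithin_mono _ Ioo_subset_Ioi_self
    have hsub : Ioo t b ⊆ Icc a b \ {t} := by
      intro z hz
      refine ⟨⟨ht.1.trans hz.1.le, hz.2.le⟩, ?_⟩
      intro h
      rw [mem_singleton_iff] at h
      rw [h] at hz
      exact lt_irrefl t hz.1
    have hmono' : 𝓝[Ioo t b] t ≤ 𝓝[Icc a b \ {t}] t := nhdsWithin_mono _ hsub
    have hφt : φ t = ‖v t‖ / Real.sqrt (2 * ‖γ t‖) := by rw [hφdef]; simp only [hproj_t]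
    rw [hφt] at hr
    suffices h : ∀ᶠ z in 𝓝[Ioo t b] t, slope f t z < r by exact (h.frequently).filter_mono hmono
    have hslope : Filter.Tendsto (fun z => ‖slope γ t z‖) (𝓝[Ioo t b] t) (𝓝 ‖v t‖) :=
      ((hasDerivWithinAt_iff_tendsto_slope.1 hγd).mono_left hmono').norm
    have hγtend : Filter.Tendsto (fun z => γ z) (𝓝[Ioo t b] t) (𝓝 (γ t)) := by
      have := (hγ.continuousOn t htIcc).tendsto
      exact this.mono_left (nhdsWithin_mono _ (fun z hz => (hsub hz).1))
    by_cases hyx : γ t = x₀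
    · -- at the center point
      have hf_t : f t = 0 := by rw [hfdef]; simp [hyx, dkOne_self]
      set Q : ℝ → ℝ := fun z => Real.sqrt 2 * ‖slope γ t z‖ / DD x₀ (γ z) with hQdef
      have hDtend : Filter.Tendsto (fun z => DD x₀ (γ z)) (𝓝[Ioo t b] t)
          (𝓝 (DD x₀ (γ t))) := ((DD_continuous x₀).continuousAt).tendsto.comp hγtend
      have hQtend : Filter.Tendsto Q (𝓝[Ioo t b] t)
          (𝓝 (Real.sqrt 2 * ‖v t‖ / DD x₀ (γ t))) :=
        (hslope.const_mul _).div hDtend (by rw [hyx]; exact (DD_pos hx₀ x₀).ne')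
      have hlim : Real.sqrt 2 * ‖v t‖ / DD x₀ (γ t) = ‖v t‖ / Real.sqrt (2 * ‖γ t‖) := by
        rw [hyx, DD_at_x₀ hx₀, ← hyx]
        exact sqrt2_div_helper _ _
      have hev : ∀ᶠ z in 𝓝[Ioo t b] t, Q z < r := by
        apply hQtend.eventually_lt_const
        rw [hlim]; exact hr
      have hevmem : ∀ᶠ z in 𝓝[Ioo t b] t, z ∈ Ioo t b := self_mem_nhdsWithin
      filter_upwards [hev, hevmem] with z hQz hzmem
      have hzt : 0 < z - t := sub_pos.2 hzmem.1
      have hns : ‖slope γ t z‖ = ‖γ z - x₀‖ / (z - t) := by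
        rw [slope_def_module, norm_smul, norm_inv, Real.norm_eq_abs, abs_of_pos hzt, hyx,
          inv_mul_eq_div]
      have heq : slope f t z = Q z := by
        rw [slope_def_field, hf_t, sub_zero, hQdef, hfdef]
        simp only []
        rw [hns, dkOne_eq_div hx₀ (γ z)]
        have hD := (DD_pos hx₀ (γ z)).ne'
        field_simp
        try ring
        try tauto
      rw [heq]; exact hQz
    · by_cases hβ0 : 0 < 2 * (‖γ t‖ * ‖x₀‖ + (inner ℝ (γ t) x₀ : ℝ))
      · -- generic point: use the derivative
        obtain ⟨w, hwle, hwfd⟩ := dkOne_hasFDerivAt hyne hyx hβ0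
        have hcomp : HasDerivWithinAt f (Real.sqrt 2 * (innerSL ℝ w (v t))) (Icc a b) t := by
          have h1 := hwfd.comp_hasDerivWithinAt t hγd
          exact h1.const_mul (Real.sqrt 2)
        have htend : Filter.Tendsto (slope f t) (𝓝[Ioo t b] t)
            (𝓝 (Real.sqrt 2 * (innerSL ℝ w (v t)))) :=
          (hasDerivWithinAt_iff_tendsto_slope.1 hcomp).mono_left hmono'
        apply htend.eventually_lt_const
        calc Real.sqrt 2 * (innerSL ℝ w (v t)) ≤ Real.sqrt 2 * (‖w‖ * ‖v t‖) := by
              apply mul_le_mul_of_nonneg_left _ (Real.sqrt_nonneg 2)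
              rw [innerSL_apply_apply]
              exact real_inner_le_norm w (v t)
          _ ≤ Real.sqrt 2 * (1 / (2 * Real.sqrt ‖γ t‖) * ‖v t‖) := by
              apply mul_le_mul_of_nonneg_left _ (Real.sqrt_nonneg 2)
              exact mul_le_mul_of_nonneg_right hwle (norm_nonneg _)
          _ = Real.sqrt 2 * ‖v t‖ / (2 * Real.sqrt ‖γ t‖) := by ring
          _ = ‖v t‖ / Real.sqrt (2 * ‖γ t‖) := sqrt2_div_helper _ _
          _ < r := hr
      · -- antipodal ray : `β = 0`
        have hβe : 2 * (‖γ t‖ * ‖x₀‖ + (inner ℝ (γ t) x₀ : ℝ)) = 0 :=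
          le_antisymm (not_lt.1 hβ0) (rad_nonneg _ _)
        set Q : ℝ → ℝ := fun z =>
          Real.sqrt 2 * ‖slope γ t z‖ / (2 * Real.sqrt (‖γ t‖ + ‖x₀‖)) with hQdef
        have hQtend : Filter.Tendsto Q (𝓝[Ioo t b] t)
            (𝓝 (Real.sqrt 2 * ‖v t‖ / (2 * Real.sqrt (‖γ t‖ + ‖x₀‖)))) :=
          (hslope.const_mul _).div_const _
        have hlim_le : Real.sqrt 2 * ‖v t‖ / (2 * Real.sqrt (‖γ t‖ + ‖x₀‖))
            ≤ ‖v t‖ / Real.sqrt (2 * ‖γ t‖) := by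
          have h1 : Real.sqrt 2 * ‖v t‖ / (2 * Real.sqrt (‖γ t‖ + ‖x₀‖))
              ≤ Real.sqrt 2 * ‖v t‖ / (2 * Real.sqrt ‖γ t‖) := by
            apply div_le_div_of_nonneg_left (by positivity) (by positivity)
            have := Real.sqrt_le_sqrt (by linarith : ‖γ t‖ ≤ ‖γ t‖ + ‖x₀‖)
            linarith
          exact h1.trans (le_of_eq (sqrt2_div_helper _ _))
        have hev : ∀ᶠ z in 𝓝[Ioo t b] t, Q z < r :=
          hQtend.eventually_lt_const (lt_of_le_of_lt hlim_le hr)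
        have hevmem : ∀ᶠ z in 𝓝[Ioo t b] t, z ∈ Ioo t b := self_mem_nhdsWithin
        filter_upwards [hev, hevmem] with z hQz hzmem
        refine lt_of_le_of_lt ?_ hQz
        have hzt : 0 < z - t := sub_pos.2 hzmem.1
        rw [slope_def_field, hQdef]
        simp only []
        rw [div_le_div_iff₀ hzt (by positivity)]
        -- f z - f t ≤ √2 ‖γ z - γ t‖/(2 √(‖γ t‖+‖x₀‖)), then multiply
        have hstep : f z - f t ≤ Real.sqrt 2 * ‖γ z - γ t‖ / (2 * Real.sqrt (‖γ t‖ + ‖x₀‖)) := by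
          have hft : f t = Real.sqrt 2 * Real.sqrt (‖γ t‖ + ‖x₀‖) := by
            rw [hfdef]
            simp only []
            rw [dkOne, hβe, Real.sqrt_zero, sub_zero]
          have hfz : f z ≤ Real.sqrt 2 * Real.sqrt (‖γ z‖ + ‖x₀‖) := by
            rw [hfdef]
            simp only []
            apply mul_le_mul_of_nonneg_left _ (Real.sqrt_nonneg 2)
            rw [dkOne]
            apply Real.sqrt_le_sqrt
            have := Real.sqrt_nonneg (2 * (‖γ z‖ * ‖x₀‖ + (inner ℝ (γ z) x₀ : ℝ)))
            linarith
          have h3 : Real.sqrt (‖γ z‖ + ‖x₀‖) - Real.sqrt (‖γ t‖ + ‖x₀‖)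
              ≤ (‖γ z‖ - ‖γ t‖) / (2 * Real.sqrt (‖γ t‖ + ‖x₀‖)) := by
            have := sqrt_sub_le' (A := ‖γ z‖ + ‖x₀‖) (B := ‖γ t‖ + ‖x₀‖)
              (by positivity) (by positivity)
            convert this using 2
            ring
          have h4 : ‖γ z‖ - ‖γ t‖ ≤ ‖γ z - γ t‖ := norm_sub_norm_le (γ z) (γ t)
          calc f z - f t ≤ Real.sqrt 2 * (Real.sqrt (‖γ z‖ + ‖x₀‖) - Real.sqrt (‖γ t‖ + ‖x₀‖)) := by
                rw [hft]; nlinarith [hfz, Real.sqrt_nonneg 2]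
            _ ≤ Real.sqrt 2 * ((‖γ z‖ - ‖γ t‖) / (2 * Real.sqrt (‖γ t‖ + ‖x₀‖))) :=
                mul_le_mul_of_nonneg_left h3 (Real.sqrt_nonneg 2)
            _ ≤ Real.sqrt 2 * (‖γ z - γ t‖ / (2 * Real.sqrt (‖γ t‖ + ‖x₀‖))) := by
                apply mul_le_mul_of_nonneg_left _ (Real.sqrt_nonneg 2)
                gcongr
            _ = Real.sqrt 2 * ‖γ z - γ t‖ / (2 * Real.sqrt (‖γ t‖ + ‖x₀‖)) := by ring
        -- now finish
        have hnorm_slope : ‖slope γ t z‖ = ‖γ z - γ t‖ / (z - t) := by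
          rw [slope_def_module, norm_smul, norm_inv, Real.norm_eq_abs, abs_of_pos hzt]
          ring
        rw [hnorm_slope]
        have h5 := mul_le_mul_of_nonneg_right hstep (le_of_lt hzt)
        calc (f z - f t) * (2 * Real.sqrt (‖γ t‖ + ‖x₀‖))
            ≤ (Real.sqrt 2 * ‖γ z - γ t‖ / (2 * Real.sqrt (‖γ t‖ + ‖x₀‖)))
              * (2 * Real.sqrt (‖γ t‖ + ‖x₀‖)) := by
              apply mul_le_mul_of_nonneg_right hstep (by positivity)
          _ = Real.sqrt 2 * ‖γ z - γ t‖ := by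
              field_simp
          _ = Real.sqrt 2 * (‖γ z - γ t‖ / (z - t)) * (z - t) := by
              field_simp
  -- apply the fencing theorem
  have hBa : f a ≤ B a := by
    rw [hBdef]; simp
  have key : f b ≤ B b :=
    image_le_of_liminf_slope_right_le_deriv_boundary hfc hBa
      (fun t _ => (hB' t).continuousAt.continuousWithinAt)
      (fun t _ => (hB' t).hasDerivWithinAt) bound (right_mem_Icc.2 hab.le)
  -- identify the integrals
  have hint : ∫ u in a..b, φ u = ∫ t in a..b, ‖deriv γ t‖ / Real.sqrt (2 * ‖γ t‖) := by
    apply intervalIntegral.integral_congr_ae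
    have h1 : ∀ᵐ u : ℝ ∂volume, u ≠ b := by
      have := measure_eq_zero_iff_ae_notMem.mp (measure_singleton (b : ℝ) : volume {b} = 0)
      filter_upwards [this] with u hu
      simpa using hu
    filter_upwards [h1] with u hu hmem'
    rw [uIoc_of_le hab.le] at hmem'
    have huIoo : u ∈ Ioo a b := ⟨hmem'.1, lt_of_le_of_ne hmem'.2 hu⟩
    have huIcc : u ∈ Icc a b := ⟨huIoo.1.le, huIoo.2.le⟩
    have hdiff : DifferentiableAt ℝ γ u := by
      have := hd u huIcc
      exact this.differentiableAt (Icc_mem_nhds huIoo.1 huIoo.2)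
    have : v u = deriv γ u := hdiff.derivWithin (uniqueDiffOn_Icc hab u huIcc)
    rw [hφdef]
    simp only [hproj_id u huIcc, this]
  rw [hBdef] at key
  simp only [] at key
  rw [hint] at key
  rw [hfdef] at key
  simp only [] at key
  linarith


lemma exists_decomp (hN : 2 ≤ N) (x x₀ : EuclideanSpace ℝ (Fin N)) (hx₀ : x₀ ≠ 0) :
    ∃ (e f : EuclideanSpace ℝ (Fin N)) (a₁ a₂ : ℝ), ‖e‖ = 1 ∧ ‖f‖ = 1 ∧ (inner ℝ e f : ℝ) = 0 ∧
      x₀ = ‖x₀‖ • e ∧ x = a₁ • e + a₂ • f ∧ 0 ≤ a₂ ∧ a₁^2 + a₂^2 = ‖x‖^2 := by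
  have hs : (0:ℝ) < ‖x₀‖ := norm_pos_iff.2 hx₀
  set e : EuclideanSpace ℝ (Fin N) := (‖x₀‖)⁻¹ • x₀ with hedef
  have he : ‖e‖ = 1 := by
    rw [hedef, norm_smul, norm_inv, norm_norm, inv_mul_cancel₀ hs.ne']
  have hee : (inner ℝ e e : ℝ) = 1 := by
    rw [real_inner_self_eq_norm_sq, he]; norm_num
  have hx₀e : x₀ = ‖x₀‖ • e := by
    rw [hedef, smul_smul, mul_inv_cancel₀ hs.ne', one_smul]
  set a₁ : ℝ := (inner ℝ x e : ℝ) with ha₁def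
  set P : EuclideanSpace ℝ (Fin N) := x - a₁ • e with hPdef
  have hPe : (inner ℝ e P : ℝ) = 0 := by
    rw [hPdef, inner_sub_right, real_inner_smul_right, hee, real_inner_comm x e]
    simp [← ha₁def]
  by_cases hP : P = 0
  · -- x is collinear with e : pick any orthogonal unit vector
    have hxe : x = a₁ • e := by
      have := sub_eq_zero.1 (hPdef ▸ hP)
      exact this
    have hKne : ((ℝ ∙ e)ᗮ : Submodule ℝ (EuclideanSpace ℝ (Fin N))) ≠ ⊥ := by
      intro hbot
      have htop : (ℝ ∙ e) = ⊤ := Submodule.orthogonal_eq_bot_iff.1 hbot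
      have hene : e ≠ 0 := by
        intro h; rw [h, norm_zero] at he; norm_num at he
      have h1 : Module.finrank ℝ (ℝ ∙ e) = 1 := finrank_span_singleton hene
      have h2 : Module.finrank ℝ (EuclideanSpace ℝ (Fin N)) = N := finrank_euclideanSpace_fin
      rw [htop] at h1
      rw [finrank_top, h2] at h1
      omega
    obtain ⟨v, hvmem, hvne⟩ := Submodule.exists_mem_ne_zero_of_ne_bot hKne
    have hv : (0:ℝ) < ‖v‖ := norm_pos_iff.2 hvne
    refine ⟨e, (‖v‖)⁻¹ • v, a₁, 0, he, ?_, ?_, hx₀e, ?_, le_refl 0, ?_⟩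
    · rw [norm_smul, norm_inv, norm_norm, inv_mul_cancel₀ hv.ne']
    · rw [real_inner_smul_right]
      have : (inner ℝ e v : ℝ) = 0 := by
        have := (Submodule.mem_orthogonal (ℝ ∙ e) v).1 hvmem
        have h := this e (Submodule.mem_span_singleton_self e)
        rwa [real_inner_comm] at h ⊢
        -- careful
      rw [this]; ring
    · rw [zero_smul, add_zero]; exact hxe
    · have : ‖x‖ = |a₁| := by rw [hxe, norm_smul, he, mul_one, Real.norm_eq_abs]
      rw [this, sq_abs]; ring
  · have hPnorm : (0:ℝ) < ‖P‖ := norm_pos_iff.2 hP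
    refine ⟨e, (‖P‖)⁻¹ • P, a₁, ‖P‖, he, ?_, ?_, hx₀e, ?_, norm_nonneg P, ?_⟩
    · rw [norm_smul, norm_inv, norm_norm, inv_mul_cancel₀ hPnorm.ne']
    · rw [real_inner_smul_right, hPe]; ring
    · rw [smul_inv_smul₀ hPnorm.ne', hPdef]; abel
    · have hxP : x = a₁ • e + P := by rw [hPdef]; abel
      have : ‖x‖^2 = a₁^2 + ‖P‖^2 := by
        rw [hxP, @norm_add_sq_real, real_inner_smul_left, hPe, norm_smul, Real.norm_eq_abs]
        rw [he, mul_one, sq_abs]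
        ring
      rw [this]

set_option maxHeartbeats 1000000 in
lemma exists_curve (hN : 2 ≤ N) (x x₀ : EuclideanSpace ℝ (Fin N))
    (hx : x ≠ 0) (hx₀ : x₀ ≠ 0) :
    ∃ γ : ℝ → EuclideanSpace ℝ (Fin N),
      PiecewiseC1 γ ∧ γ 0 = x₀ ∧ γ 1 = x ∧ (∀ t ∈ Set.Icc (0:ℝ) 1, γ t ≠ 0) ∧
      (∫ t in (0:ℝ)..1, ‖deriv γ t‖ / Real.sqrt (2 * ‖γ t‖)) = Real.sqrt 2 * dkOne x x₀ := by
  obtain ⟨e, f, a₁, a₂, he, hf, hef, hx₀e, hxe, ha₂, hsq⟩ := exists_decomp hN x x₀ hx₀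
  have hee : (inner ℝ e e : ℝ) = 1 := by rw [real_inner_self_eq_norm_sq, he]; norm_num
  have hff : (inner ℝ f f : ℝ) = 1 := by rw [real_inner_self_eq_norm_sq, hf]; norm_num
  set s : ℝ := ‖x₀‖ with hsdef
  set r : ℝ := ‖x‖ with hrdef
  have hs : (0:ℝ) < s := norm_pos_iff.2 hx₀
  have hr : (0:ℝ) < r := norm_pos_iff.2 hx
  have hra : a₁^2 ≤ r^2 := by nlinarith [sq_nonneg a₂]
  have hra1 : 0 ≤ r + a₁ := by nlinarith [sq_nonneg (a₁ + r)]
  have hra2 : 0 ≤ r - a₁ := by nlinarith [sq_nonneg (a₁ - r)]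
  set p0 : ℝ := Real.sqrt s with hp0def
  set q1 : ℝ := Real.sqrt ((r + a₁)/2) with hq1def
  set q2 : ℝ := Real.sqrt ((r - a₁)/2) with hq2def
  have hp0 : p0^2 = s := Real.sq_sqrt hs.le
  have hp0pos : 0 < p0 := Real.sqrt_pos.2 hs
  have hq1sq : q1^2 = (r + a₁)/2 := Real.sq_sqrt (by linarith)
  have hq2sq : q2^2 = (r - a₁)/2 := Real.sq_sqrt (by linarith)
  have hq1n : 0 ≤ q1 := Real.sqrt_nonneg _
  have hq2n : 0 ≤ q2 := Real.sqrt_nonneg _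
  have hq12 : q1^2 + q2^2 = r := by rw [hq1sq, hq2sq]; ring
  have h2q : 2*q1*q2 = a₂ := by
    have h1 : q1 * q2 = Real.sqrt (((r+a₁)/2) * ((r-a₁)/2)) :=
      (Real.sqrt_mul (by linarith) _).symm
    have h2 : ((r+a₁)/2) * ((r-a₁)/2) = (a₂/2)^2 := by nlinarith []
    rw [mul_assoc, h1, h2, Real.sqrt_sq (by linarith)]
    ring
  set dp : ℝ := q1 - p0 with hdpdef
  set PP : ℝ → ℝ := fun t => p0 + t * dp with hPPdef
  set QQ : ℝ → ℝ := fun t => t * q2 with hQQdef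
  set u : ℝ → ℝ := fun t => PP t^2 - QQ t^2 with hudef
  set w : ℝ → ℝ := fun t => 2 * PP t * QQ t with hwdef
  set γ : ℝ → EuclideanSpace ℝ (Fin N) := fun t => u t • e + w t • f with hγdef
  set K : ℝ := dp^2 + q2^2 with hKdef
  -- norms of combinations
  have hcomb : ∀ A C : ℝ, ‖A • e + C • f‖^2 = A^2 + C^2 := by
    intro A C
    rw [@norm_add_sq_real, real_inner_smul_left, real_inner_smul_right, hef, norm_smul, norm_smul,
      Real.norm_eq_abs, Real.norm_eq_abs, he, hf]
    rw [mul_one, mul_one, sq_abs, sq_abs]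
    ring
  have hnormγ : ∀ t, ‖γ t‖ = PP t^2 + QQ t^2 := by
    intro t
    have h1 : ‖γ t‖^2 = (PP t^2 + QQ t^2)^2 := by
      rw [hγdef]; simp only []
      rw [hcomb, hudef, hwdef]; ring
    have := congrArg Real.sqrt h1
    rwa [Real.sqrt_sq (norm_nonneg _), Real.sqrt_sq (by positivity)] at this
  have hApos : ∀ t ∈ Icc (0:ℝ) 1, 0 < PP t^2 + QQ t^2 := by
    intro t ht
    rcases eq_or_lt_of_le ht.2 with h1 | h1
    · have hPP1 : PP t = q1 := by
        rw [hPPdef]; simp only []; rw [h1, hdpdef]; ring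
      have hQQ1 : QQ t = q2 := by
        rw [hQQdef]; simp only []; rw [h1, one_mul]
      rw [hPP1, hQQ1, hq12]; exact hr
    · have hPPt : 0 < PP t := by
        have : PP t = (1-t)*p0 + t*q1 := by rw [hPPdef, hdpdef]; ring
        rw [this]
        have h2 : 0 < (1-t)*p0 := by nlinarith
        nlinarith [mul_nonneg ht.1 hq1n]
      nlinarith [sq_nonneg (QQ t)]
  -- derivatives
  have hPPd : ∀ t, HasDerivAt PP dp t := by
    intro t
    have := ((hasDerivAt_id t).mul_const dp).const_add p0
    simpa [hPPdef] using this
  have hQQd : ∀ t, HasDerivAt QQ q2 t := by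
    intro t
    have := (hasDerivAt_id t).mul_const q2
    simpa using this
  have hud : ∀ t, HasDerivAt u (2*PP t*dp - 2*QQ t*q2) t := by
    intro t
    have h1 := ((hPPd t).pow 2).sub ((hQQd t).pow 2)
    refine h1.congr_deriv ?_
    norm_num
  have hwd : ∀ t, HasDerivAt w (2*(dp * QQ t + PP t * q2)) t := by
    intro t
    have h1 := (((hPPd t).const_mul 2).mul (hQQd t))
    refine h1.congr_deriv ?_
    ring
  have hγd : ∀ t, HasDerivAt γ ((2*PP t*dp - 2*QQ t*q2) • e + (2*(dp * QQ t + PP t * q2)) • f) t :=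
    fun t => ((hud t).smul_const e).add ((hwd t).smul_const f)
  have hderiv : ∀ t, deriv γ t = (2*PP t*dp - 2*QQ t*q2) • e + (2*(dp * QQ t + PP t * q2)) • f :=
    fun t => (hγd t).deriv
  have hndg : ∀ t, ‖deriv γ t‖ = Real.sqrt (4 * (PP t^2 + QQ t^2) * K) := by
    intro t
    rw [hderiv t]
    have h1 : ‖(2*PP t*dp - 2*QQ t*q2) • e + (2*(dp * QQ t + PP t * q2)) • f‖^2
        = 4 * (PP t^2 + QQ t^2) * K := by
      rw [hcomb, hKdef]; ring
    have := congrArg Real.sqrt h1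
    rwa [Real.sqrt_sq (norm_nonneg _)] at this
  -- continuity / smoothness
  have hsm : ContDiff ℝ 1 γ := by
    have hu' : ContDiff ℝ 1 u := by
      apply ContDiff.sub
      · exact ((contDiff_const.add (contDiff_id.mul contDiff_const)).pow 2)
      · exact ((contDiff_id.mul contDiff_const).pow 2)
    have hw' : ContDiff ℝ 1 w := by
      apply ContDiff.mul
      · exact contDiff_const.mul (contDiff_const.add (contDiff_id.mul contDiff_const))
      · exact contDiff_id.mul contDiff_const
    exact (hu'.smul contDiff_const).add (hw'.smul contDiff_const)
  have hγne : ∀ t ∈ Icc (0:ℝ) 1, γ t ≠ 0 := by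
    intro t ht
    have := hApos t ht
    intro h0
    have hn := hnormγ t
    rw [h0, norm_zero] at hn
    nlinarith [this, hn]
  -- endpoint values
  have hPP1' : PP 1 = q1 := by rw [hPPdef]; simp only []; rw [hdpdef]; ring
  have hQQ1' : QQ 1 = q2 := by rw [hQQdef]; simp only []; rw [one_mul]
  have hγ0 : γ 0 = x₀ := by
    have hu0 : u 0 = s := by
      rw [hudef]; simp only []
      rw [hPPdef, hQQdef]; simp only []
      rw [zero_mul, add_zero, zero_mul]
      rw [← hp0]; ring
    have hw0 : w 0 = 0 := by
      rw [hwdef]; simp only []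
      rw [hQQdef]; simp only []
      rw [zero_mul, mul_zero]
    rw [hγdef]; simp only []
    rw [hu0, hw0, zero_smul, add_zero]
    try exact hx₀e.symm
  have hγ1 : γ 1 = x := by
    have hu1 : u 1 = a₁ := by
      rw [hudef]; simp only []
      rw [hPP1', hQQ1', hq1sq, hq2sq]; ring
    have hw1 : w 1 = a₂ := by
      rw [hwdef]; simp only []
      rw [hPP1', hQQ1', ← h2q]
    rw [hγdef]; simp only []
    rw [hu1, hw1, ← hxe]
  -- the conformal length
  have hL : (∫ t in (0:ℝ)..1, ‖deriv γ t‖ / Real.sqrt (2 * ‖γ t‖))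
      = Real.sqrt 2 * dkOne x x₀ := by
    have hint : EqOn (fun t => ‖deriv γ t‖ / Real.sqrt (2 * ‖γ t‖))
        (fun _ => Real.sqrt (2*K)) (uIcc (0:ℝ) 1) := by
      intro t ht
      rw [uIcc_of_le (by norm_num : (0:ℝ) ≤ 1)] at ht
      have hA := hApos t ht
      simp only []
      rw [hndg t, hnormγ t]
      have h4 : 4*(PP t^2+QQ t^2)*K = (2*(PP t^2 + QQ t^2)) * (2*K) := by ring
      rw [h4, Real.sqrt_mul (by positivity)]
      rw [mul_comm, mul_div_assoc, div_self (by positivity : Real.sqrt (2*(PP t^2 + QQ t^2)) ≠ 0),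
        mul_one]
    rw [intervalIntegral.integral_congr hint]
    simp only [intervalIntegral.integral_const, smul_eq_mul, sub_zero, one_mul]
    rw [Real.sqrt_mul (by norm_num : (0:ℝ) ≤ 2) K]
    congr 1
    have hfe : (inner ℝ f e : ℝ) = 0 := by rw [real_inner_comm]; exact hef
    have hinner : (inner ℝ x x₀ : ℝ) = a₁ * s := by
      rw [hxe, hx₀e, inner_add_left, real_inner_smul_left, real_inner_smul_left,
        real_inner_smul_right, real_inner_smul_right, hee, hfe]
      ring
    have hbb : Real.sqrt (2*(r*s + a₁*s)) = 2*p0*q1 := by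
      rw [show 2*(r*s+a₁*s) = (2*p0*q1)^2 from by
        rw [mul_pow, mul_pow, hp0, hq1sq]; ring]
      exact Real.sqrt_sq (by positivity)
    have hK : K = r + s - Real.sqrt (2*(r*s + a₁*s)) := by
      rw [hbb, hKdef, hdpdef]
      linear_combination hq12 + hp0
    rw [dkOne, ← hrdef, ← hsdef, hinner, ← hK]
  -- assemble
  refine ⟨γ, ⟨hsm.continuous.continuousOn, 1, fun i : Fin 2 => (i.val : ℝ), ?_, ?_, ?_, ?_⟩,
    hγ0, hγ1, hγne, hL⟩
  · intro i j hij
    show ((i.val : ℝ) < (j.val : ℝ))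
    exact_mod_cast Fin.lt_def.mp hij
  · norm_num
  · norm_num [Fin.last]
  · intro i
    exact hsm.contDiffOn


lemma piece_integrable {γ : ℝ → EuclideanSpace ℝ (Fin N)} {a b : ℝ} (hab : a < b)
    (hγ : ContDiffOn ℝ 1 γ (Icc a b)) (hne : ∀ t ∈ Icc a b, γ t ≠ 0) :
    IntervalIntegrable (fun t => ‖deriv γ t‖ / Real.sqrt (2 * ‖γ t‖)) volume a b := by
  have hd : DifferentiableOn ℝ γ (Icc a b) := hγ.differentiableOn one_ne_zero
  set v : ℝ → EuclideanSpace ℝ (Fin N) := fun t => derivWithin γ (Icc a b) t with hv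
  have hvc : ContinuousOn v (Icc a b) :=
    hγ.continuousOn_derivWithin (uniqueDiffOn_Icc hab) le_rfl
  set proj : ℝ → ℝ := fun t => max a (min b t) with hproj
  have hproj_cont : Continuous proj := continuous_const.max (continuous_const.min continuous_id)
  have hmem : ∀ t, proj t ∈ Icc a b := fun t => ⟨le_max_left _ _,
    max_le hab.le (min_le_left _ _)⟩
  have hproj_id : ∀ t ∈ Icc a b, proj t = t := fun t ht => by
    rw [hproj]; simp only [min_eq_right ht.2, max_eq_right ht.1]
  set φ : ℝ → ℝ := fun t => ‖v (proj t)‖ / Real.sqrt (2 * ‖γ (proj t)‖) with hφdef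
  have hγproj : Continuous (fun t => γ (proj t)) :=
    hγ.continuousOn.comp_continuous hproj_cont hmem
  have hφ : Continuous φ := by
    apply ((hvc.comp_continuous hproj_cont hmem).norm).div
      (Real.continuous_sqrt.comp (continuous_const.mul hγproj.norm))
    intro t
    have h0 : (0:ℝ) < ‖γ (proj t)‖ := norm_pos_iff.2 (hne _ (hmem t))
    have h1 : (0:ℝ) < 2 * ‖γ (proj t)‖ := by linarith
    simpa using (Real.sqrt_pos.2 h1).ne'
  rw [intervalIntegrable_iff_integrableOn_Ioc_of_le hab.le]
  have hφint : IntegrableOn φ (Ioc a b) volume :=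
    (hφ.integrableOn_Icc).mono_set Ioc_subset_Icc_self
  apply hφint.congr
  refine (MeasureTheory.ae_restrict_iff' measurableSet_Ioc).2 ?_
  have h1 : ∀ᵐ u : ℝ ∂volume, u ≠ b := by
    have := measure_eq_zero_iff_ae_notMem.mp (measure_singleton (b : ℝ) : volume {b} = 0)
    filter_upwards [this] with u hu
    simpa using hu
  filter_upwards [h1] with u hu humem
  have huIoo : u ∈ Ioo a b := ⟨humem.1, lt_of_le_of_ne humem.2 hu⟩
  have huIcc : u ∈ Icc a b := ⟨huIoo.1.le, huIoo.2.le⟩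
  have hdiff : DifferentiableAt ℝ γ u :=
    (hd u huIcc).differentiableAt (Icc_mem_nhds huIoo.1 huIoo.2)
  have hvu : v u = deriv γ u := hdiff.derivWithin (uniqueDiffOn_Icc hab u huIcc)
  rw [hφdef]
  simp only [hproj_id u huIcc, hvu]

theorem statement4' (hN : 2 ≤ N) (x x₀ : EuclideanSpace ℝ (Fin N))
    (hx : x ≠ 0) (hx₀ : x₀ ≠ 0) :
    sInf {L : ℝ | ∃ γ : ℝ → EuclideanSpace ℝ (Fin N),
        PiecewiseC1 γ ∧ γ 0 = x₀ ∧ γ 1 = x ∧ (∀ t ∈ Set.Icc (0 : ℝ) 1, γ t ≠ 0) ∧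
        L = ∫ t in (0 : ℝ)..1, ‖deriv γ t‖ / Real.sqrt (2 * ‖γ t‖)} =
      Real.sqrt 2 * dkOne x x₀ := by
  obtain ⟨γ₀, hpc, h0, h1, hne0, hLval⟩ := exists_curve hN x x₀ hx hx₀
  have hmem : Real.sqrt 2 * dkOne x x₀ ∈ {L : ℝ | ∃ γ : ℝ → EuclideanSpace ℝ (Fin N),
      PiecewiseC1 γ ∧ γ 0 = x₀ ∧ γ 1 = x ∧ (∀ t ∈ Set.Icc (0 : ℝ) 1, γ t ≠ 0) ∧
      L = ∫ t in (0 : ℝ)..1, ‖deriv γ t‖ / Real.sqrt (2 * ‖γ t‖)} :=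
    ⟨γ₀, hpc, h0, h1, hne0, hLval.symm⟩
  have hlow : ∀ L ∈ {L : ℝ | ∃ γ : ℝ → EuclideanSpace ℝ (Fin N),
      PiecewiseC1 γ ∧ γ 0 = x₀ ∧ γ 1 = x ∧ (∀ t ∈ Set.Icc (0 : ℝ) 1, γ t ≠ 0) ∧
      L = ∫ t in (0 : ℝ)..1, ‖deriv γ t‖ / Real.sqrt (2 * ‖γ t‖)},
      Real.sqrt 2 * dkOne x x₀ ≤ L := by
    rintro L ⟨γ, ⟨hcont, n, p, hmono, hp0, hplast, hpieces⟩, hγ0, hγ1, hγne, rfl⟩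
    have hprange : ∀ i : Fin (n+1), p i ∈ Icc (0:ℝ) 1 := fun i =>
      ⟨hp0 ▸ hmono.monotone (Fin.zero_le i), hplast ▸ hmono.monotone (Fin.le_last i)⟩
    have hsubset : ∀ i : Fin n, Icc (p i.castSucc) (p i.succ) ⊆ Icc (0:ℝ) 1 := fun i =>
      Icc_subset_Icc (hprange _).1 (hprange _).2
    have key : ∀ j : Fin (n+1),
        (Real.sqrt 2 * dkOne (γ (p j)) x₀ - Real.sqrt 2 * dkOne (γ (p 0)) x₀
          ≤ ∫ t in (p 0)..(p j), ‖deriv γ t‖ / Real.sqrt (2 * ‖γ t‖)) ∧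
        IntervalIntegrable (fun t => ‖deriv γ t‖ / Real.sqrt (2 * ‖γ t‖)) volume (p 0) (p j) := by
      intro j
      induction j using Fin.induction with
      | zero => exact ⟨by simp, IntervalIntegrable.refl⟩
      | succ i ih =>
        have hab : p i.castSucc < p i.succ := hmono (Fin.castSucc_lt_succ (i := i))
        have hnei : ∀ t ∈ Icc (p i.castSucc) (p i.succ), γ t ≠ 0 := fun t ht =>
          hγne t (hsubset i ht)
        have hpb := piece_bound hab hx₀ (hpieces i) hnei
        have hpi := piece_integrable hab (hpieces i) hnei
        have hadd := intervalIntegral.integral_add_adjacent_intervals ih.2 hpi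
        constructor
        · rw [← hadd]
          linarith [ih.1, hpb]
        · exact ih.2.trans hpi
    have hfin := (key (Fin.last n)).1
    rw [hp0, hplast, hγ0, hγ1, dkOne_self] at hfin
    simpa using hfin
  apply le_antisymm
  · exact csInf_le ⟨_, fun L hL => hlow L hL⟩ hmem
  · exact le_csInf ⟨_, hmem⟩ hlow


end St4

end

/-- for `N ≥ 2`, the infimum of the conformal lengths (density `1/√(2|x|)`)
of piecewise `C¹` curves from `x₀` to `x` avoiding the origin equals `√2 · d(x, x₀)`;
i.e. `√2 d` is the Riemannian distance determined by the coefficient `1/√(2|x|)`. -/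
theorem statement4 (N : ℕ) (hN : 2 ≤ N) (x x₀ : EuclideanSpace ℝ (Fin N))
    (hx : x ≠ 0) (hx₀ : x₀ ≠ 0) :
    sInf {L : ℝ | ∃ γ : ℝ → EuclideanSpace ℝ (Fin N),
        PiecewiseC1 γ ∧ γ 0 = x₀ ∧ γ 1 = x ∧ (∀ t ∈ Set.Icc (0 : ℝ) 1, γ t ≠ 0) ∧
        L = ∫ t in (0 : ℝ)..1, ‖deriv γ t‖ / Real.sqrt (2 * ‖γ t‖)} =
      Real.sqrt 2 * dkOne x x₀ := 
  St4.statement4' hN x x₀ hx hx₀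
end

section
/- Let G be a finite subgroup of the orthogonal group O(N) acting on ℝ^N, let x, y ∈ ℝ^N, let η belong to the convex hull of the orbit G·x = {g·x : g ∈ G}, and let u ∈ [−1, 1]. Then ‖x‖‖y‖ + ⟨η, y⟩ ≥ 0, the quantity ‖x‖ + ‖y‖ − sqrt(2(‖x‖‖y‖ + ⟨η, y⟩))·u is nonnegative, and sqrt( ‖x‖ + ‖y‖ − sqrt(2(‖x‖‖y‖ + ⟨η, y⟩))·u ) ≥ min_{g ∈ G} d(g·x, y). -/
private lemma key_sqrt {a b c : ℝ} (ha : 0 ≤ a) (hb : 0 ≤ b) (hc : c ≤ a * b) :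
    Real.sqrt (2 * (a * b + c)) ≤ a + b := by
  have h : 2 * (a * b + c) ≤ (a + b) ^ 2 := by nlinarith [sq_nonneg (a - b)]
  calc Real.sqrt (2 * (a * b + c)) ≤ Real.sqrt ((a + b) ^ 2) := Real.sqrt_le_sqrt h
    _ = a + b := Real.sqrt_sq (by linarith)

/-- for a finite group `G` of orthogonal transformations of `ℝ^N`,
`η` in the convex hull of the orbit `G·x`, and `u ∈ [−1,1]`, one has
`‖x‖‖y‖ + ⟨η,y⟩ ≥ 0`, the quantity `‖x‖ + ‖y‖ − sqrt(2(‖x‖‖y‖+⟨η,y⟩))·u` is nonnegative,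
and its square root is at least `min_{g ∈ G} d(g·x, y)`. -/
theorem statement7 (N : ℕ)
    (G : Subgroup (EuclideanSpace ℝ (Fin N) ≃ₗᵢ[ℝ] EuclideanSpace ℝ (Fin N)))
    (hGfin : Finite G)
    (x y η : EuclideanSpace ℝ (Fin N))
    (hη : η ∈ convexHull ℝ {z | ∃ g ∈ G, z = g x})
    (u : ℝ) (hu : u ∈ Set.Icc (-1 : ℝ) 1) :
    0 ≤ ‖x‖ * ‖y‖ + (inner ℝ η y : ℝ) ∧
    0 ≤ ‖x‖ + ‖y‖ - Real.sqrt (2 * (‖x‖ * ‖y‖ + (inner ℝ η y : ℝ))) * u ∧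
    Real.sqrt (‖x‖ + ‖y‖ - Real.sqrt (2 * (‖x‖ * ‖y‖ + (inner ℝ η y : ℝ))) * u) ≥
      ⨅ g : G, dkOne ((g : EuclideanSpace ℝ (Fin N) ≃ₗᵢ[ℝ] EuclideanSpace ℝ (Fin N)) x) y := by
  -- η is in the closed ball of radius ‖x‖
  have horb : {z | ∃ g ∈ G, z = g x} ⊆ Metric.closedBall (0 : EuclideanSpace ℝ (Fin N)) ‖x‖ := by
    rintro z ⟨g, -, rfl⟩
    simp [mem_closedBall_zero_iff, g.norm_map]
  have hηnorm : ‖η‖ ≤ ‖x‖ := by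
    have := convexHull_min horb (convex_closedBall _ _) hη
    simpa [mem_closedBall_zero_iff] using this
  have habs : |(inner ℝ η y : ℝ)| ≤ ‖x‖ * ‖y‖ :=
    (abs_real_inner_le_norm η y).trans (by
      exact mul_le_mul_of_nonneg_right hηnorm (norm_nonneg y))
  have h1 : 0 ≤ ‖x‖ * ‖y‖ + (inner ℝ η y : ℝ) := by
    have := abs_le.mp habs
    linarith [this.1]
  -- choose g₀ maximizing ⟨g x, y⟩
  have hGne : Nonempty G := ⟨1⟩
  obtain ⟨g₀, hg₀⟩ := Finite.exists_max
    (fun g : G => (inner ℝ ((g : EuclideanSpace ℝ (Fin N) ≃ₗᵢ[ℝ] EuclideanSpace ℝ (Fin N)) x) y : ℝ))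
  -- ⟨η, y⟩ ≤ ⟨g₀ x, y⟩
  have hlin : IsLinearMap ℝ (fun z : EuclideanSpace ℝ (Fin N) => (inner ℝ z y : ℝ)) :=
    ⟨fun a b => inner_add_left a b y, fun c a => real_inner_smul_left a y c⟩
  have hcv : Convex ℝ {z : EuclideanSpace ℝ (Fin N) |
      (inner ℝ z y : ℝ) ≤ (inner ℝ ((g₀ : EuclideanSpace ℝ (Fin N) ≃ₗᵢ[ℝ] EuclideanSpace ℝ (Fin N)) x) y : ℝ)} :=
    convex_halfSpace_le hlin _
  have hsub : {z | ∃ g ∈ G, z = g x} ⊆ {z : EuclideanSpace ℝ (Fin N) |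
      (inner ℝ z y : ℝ) ≤ (inner ℝ ((g₀ : EuclideanSpace ℝ (Fin N) ≃ₗᵢ[ℝ] EuclideanSpace ℝ (Fin N)) x) y : ℝ)} := by
    rintro z ⟨g, hg, rfl⟩
    exact hg₀ ⟨g, hg⟩
  have hle : (inner ℝ η y : ℝ) ≤ (inner ℝ ((g₀ : EuclideanSpace ℝ (Fin N) ≃ₗᵢ[ℝ] EuclideanSpace ℝ (Fin N)) x) y : ℝ) :=
    convexHull_min hsub hcv hη
  set c := (inner ℝ ((g₀ : EuclideanSpace ℝ (Fin N) ≃ₗᵢ[ℝ] EuclideanSpace ℝ (Fin N)) x) y : ℝ) with hc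
  have hcle : c ≤ ‖x‖ * ‖y‖ := by
    have := real_inner_le_norm ((g₀ : EuclideanSpace ℝ (Fin N) ≃ₗᵢ[ℝ] EuclideanSpace ℝ (Fin N)) x) y
    rwa [LinearIsometryEquiv.norm_map] at this
  set S := Real.sqrt (2 * (‖x‖ * ‖y‖ + (inner ℝ η y : ℝ))) with hS
  set T := Real.sqrt (2 * (‖x‖ * ‖y‖ + c)) with hT
  have hST : S ≤ T := Real.sqrt_le_sqrt (by linarith)
  have hSu : S * u ≤ T := by
    have h1' : S * u ≤ S * 1 := mul_le_mul_of_nonneg_left hu.2 (Real.sqrt_nonneg _)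
    rw [mul_one] at h1'; exact h1'.trans hST
  have hTle : T ≤ ‖x‖ + ‖y‖ := key_sqrt (norm_nonneg x) (norm_nonneg y) hcle
  have h2 : 0 ≤ ‖x‖ + ‖y‖ - S * u := by linarith
  refine ⟨h1, h2, ?_⟩
  have hd : dkOne ((g₀ : EuclideanSpace ℝ (Fin N) ≃ₗᵢ[ℝ] EuclideanSpace ℝ (Fin N)) x) y ≤
      Real.sqrt (‖x‖ + ‖y‖ - S * u) := by
    rw [dkOne, LinearIsometryEquiv.norm_map, ← hc, ← hT]
    exact Real.sqrt_le_sqrt (by linarith)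
  have hbdd : BddBelow (Set.range fun g : G =>
      dkOne ((g : EuclideanSpace ℝ (Fin N) ≃ₗᵢ[ℝ] EuclideanSpace ℝ (Fin N)) x) y) := by
    refine ⟨0, ?_⟩
    rintro r ⟨g, rfl⟩
    exact Real.sqrt_nonneg _
  exact le_trans (ciInf_le hbdd g₀) hd
end
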